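/- arXiv:2604.06908 — 6 statements merged into one kernel-verified Lean document; each statement's English description precedes it below -/
import Mathlib

section
/- Let ρ and σ be density matrices on ℂ^n with σ positive definite. If 0 < α < 1, then Tr(ρ σ^{α−1}) ≥ (Tr ρ^α)^{1/α} · (Tr σ^α)^{(α−1)/α}. If α > 1, then the reverse inequality holds: Tr(ρ σ^{α−1}) ≤ (Tr ρ^α)^{1/α} · (Tr σ^α)^{(α−1)/α}. -/
open Matrix ComplexOrder

/-- Real power of a Hermitian matrix via its spectral decomposition:
`A ^ r = ∑ i, (λ i) ^ r |x i⟩⟨x i|` (and `0` if `A` is not Hermitian). -/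
noncomputable def mRpow {m : Type*} [Fintype m] [DecidableEq m]
    (A : Matrix m m ℂ) (r : ℝ) : Matrix m m ℂ :=
  if hA : A.IsHermitian then
    (hA.eigenvectorUnitary : Matrix m m ℂ) *
      Matrix.diagonal (fun i => ((hA.eigenvalues i ^ r : ℝ) : ℂ)) *
      star (hA.eigenvectorUnitary : Matrix m m ℂ)
  else 0

/-- The quantum relative α-entropy
`S_α(ρ‖σ) = (α/(1−α))·log Tr(ρ σ^{α−1}) − (1/(1−α))·log Tr(ρ^α) + log Tr(σ^α)`. -/
noncomputable def Salpha {m : Type*} [Fintype m] [DecidableEq m]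
    (α : ℝ) (ρ σ : Matrix m m ℂ) : ℝ :=
  α / (1 - α) * Real.log ((ρ * mRpow σ (α - 1)).trace.re)
    - 1 / (1 - α) * Real.log ((mRpow ρ α).trace.re)
    + Real.log ((mRpow σ α).trace.re)

section ScalarLemmas
open Finset

lemma holder_w {ι : Type*} (s : Finset ι) {α : ℝ} (hα : 1 < α)
    (w f g : ι → ℝ) (hw : ∀ i, 0 ≤ w i) (hf : ∀ i, 0 ≤ f i) (hg : ∀ i, 0 ≤ g i) :
    ∑ i ∈ s, w i * (f i * g i ^ (α - 1))
      ≤ (∑ i ∈ s, w i * f i ^ α) ^ (1/α) * (∑ i ∈ s, w i * g i ^ α) ^ ((α - 1)/α) := by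
  have hα0 : (0:ℝ) < α := lt_trans one_pos hα
  have hs : α - 1 ≠ 0 := sub_ne_zero.2 (ne_of_gt hα)
  have hpq : Real.HolderConjugate α (α / (α - 1)) := Real.holderConjugate_iff.mpr ⟨hα, by field_simp; ring⟩
  have H := Real.inner_le_Lp_mul_Lq_of_nonneg s hpq
      (f := fun i => w i ^ (1/α) * f i) (g := fun i => w i ^ ((α-1)/α) * g i ^ (α-1))
      (fun i _ => mul_nonneg (Real.rpow_nonneg (hw i) _) (hf i))
      (fun i _ => mul_nonneg (Real.rpow_nonneg (hw i) _) (Real.rpow_nonneg (hg i) _))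
  have e1 : ∀ i, (w i ^ (1/α) * f i) * (w i ^ ((α-1)/α) * g i ^ (α-1))
      = w i * (f i * g i ^ (α-1)) := by
    intro i
    have h2 : w i ^ (1/α) * w i ^ ((α-1)/α) = w i := by
      rw [← Real.rpow_add' (hw i) (by rw [← add_div, add_sub_cancel, div_self hα0.ne']; exact one_ne_zero), show 1/α + (α-1)/α = 1 by field_simp; ring,
        Real.rpow_one]
    calc (w i ^ (1/α) * f i) * (w i ^ ((α-1)/α) * g i ^ (α-1))
        = (w i ^ (1/α) * w i ^ ((α-1)/α)) * (f i * g i ^ (α-1)) := by ring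
      _ = w i * (f i * g i ^ (α-1)) := by rw [h2]
  have e2 : ∀ i, (w i ^ (1/α) * f i) ^ α = w i * f i ^ α := by
    intro i
    rw [Real.mul_rpow (Real.rpow_nonneg (hw i) _) (hf i), ← Real.rpow_mul (hw i),
      one_div, inv_mul_cancel₀ hα0.ne', Real.rpow_one]
  have e3 : ∀ i, (w i ^ ((α-1)/α) * g i ^ (α-1)) ^ (α/(α-1)) = w i * g i ^ α := by
    intro i
    rw [Real.mul_rpow (Real.rpow_nonneg (hw i) _) (Real.rpow_nonneg (hg i) _),
      ← Real.rpow_mul (hw i), ← Real.rpow_mul (hg i),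
      show (α-1)/α * (α/(α-1)) = 1 by field_simp, Real.rpow_one,
      show (α-1) * (α/(α-1)) = α by field_simp]
  have e4 : 1 / (α/(α-1)) = (α-1)/α := by field_simp
  simp only [e1, e2, e3, e4] at H
  exact H

lemma holder_w_rev {ι : Type*} (s : Finset ι) {α : ℝ} (hα0 : 0 < α) (hα1 : α < 1)
    (w f g : ι → ℝ) (hw : ∀ i, 0 ≤ w i) (hf : ∀ i, 0 ≤ f i) (hg : ∀ i, 0 < g i) :
    (∑ i ∈ s, w i * f i ^ α) ^ (1/α) * (∑ i ∈ s, w i * g i ^ α) ^ ((α - 1)/α)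
      ≤ ∑ i ∈ s, w i * (f i * g i ^ (α - 1)) := by
  set L := ∑ i ∈ s, w i * f i ^ α with hL
  set D := ∑ i ∈ s, w i * g i ^ α with hD
  set S := ∑ i ∈ s, w i * (f i * g i ^ (α - 1)) with hS
  have hLnn : 0 ≤ L := Finset.sum_nonneg fun i _ =>
    mul_nonneg (hw i) (Real.rpow_nonneg (hf i) _)
  have hDnn : 0 ≤ D := Finset.sum_nonneg fun i _ =>
    mul_nonneg (hw i) (Real.rpow_nonneg (hg i).le _)
  have hSnn : 0 ≤ S := Finset.sum_nonneg fun i _ =>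
    mul_nonneg (hw i) (mul_nonneg (hf i) (Real.rpow_nonneg (hg i).le _))
  have h1α : (0:ℝ) < 1 - α := by linarith
  have hpq : Real.HolderConjugate (1/α) (1/(1-α)) := by
    rw [one_div, one_div]
    exact Real.HolderConjugate.inv_inv hα0 h1α (by ring)
  have key : L ≤ S ^ α * D ^ (1 - α) := by
    have H := Real.inner_le_Lp_mul_Lq_of_nonneg s hpq
        (f := fun i => (w i * (f i * g i ^ (α-1))) ^ α)
        (g := fun i => (w i * g i ^ α) ^ (1-α))
        (fun i _ => Real.rpow_nonneg
          (mul_nonneg (hw i) (mul_nonneg (hf i) (Real.rpow_nonneg (hg i).le _))) _)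
        (fun i _ => Real.rpow_nonneg (mul_nonneg (hw i) (Real.rpow_nonneg (hg i).le _)) _)
    have e1 : ∀ i, ((w i * (f i * g i ^ (α-1))) ^ α) * ((w i * g i ^ α) ^ (1-α))
        = w i * f i ^ α := by
      intro i
      rw [Real.mul_rpow (hw i) (mul_nonneg (hf i) (Real.rpow_nonneg (hg i).le _)),
        Real.mul_rpow (hw i) (Real.rpow_nonneg (hg i).le _),
        Real.mul_rpow (hf i) (Real.rpow_nonneg (hg i).le _),
        ← Real.rpow_mul (hg i).le, ← Real.rpow_mul (hg i).le]
      have hgi := hg i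
      calc w i ^ α * (f i ^ α * g i ^ ((α-1)*α)) * (w i ^ (1-α) * g i ^ (α*(1-α)))
          = (w i ^ α * w i ^ (1-α)) * (g i ^ ((α-1)*α) * g i ^ (α*(1-α))) * f i ^ α := by ring
        _ = w i * f i ^ α := by
            rw [← Real.rpow_add' (hw i) (by norm_num), ← Real.rpow_add hgi,
              show α + (1-α) = 1 by ring, show (α-1)*α + α*(1-α) = 0 by ring,
              Real.rpow_one, Real.rpow_zero, mul_one]
    have e2 : ∀ i, ((w i * (f i * g i ^ (α-1))) ^ α) ^ (1/α) = w i * (f i * g i ^ (α-1)) := by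
      intro i
      rw [← Real.rpow_mul (mul_nonneg (hw i) (mul_nonneg (hf i) (Real.rpow_nonneg (hg i).le _))),
        mul_one_div, div_self hα0.ne', Real.rpow_one]
    have e3 : ∀ i, ((w i * g i ^ α) ^ (1-α)) ^ (1/(1-α)) = w i * g i ^ α := by
      intro i
      rw [← Real.rpow_mul (mul_nonneg (hw i) (Real.rpow_nonneg (hg i).le _)),
        mul_one_div, div_self h1α.ne', Real.rpow_one]
    simp only [e1, e2, e3, one_div_one_div] at H
    exact H
  rcases eq_or_lt_of_le hLnn with hL0 | hLpos
  · rw [← hL0, Real.zero_rpow (by positivity : (1:ℝ)/α ≠ 0), zero_mul]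
    exact hSnn
  · have hDpos : 0 < D := by
      by_contra hDc
      push_neg at hDc
      have : D = 0 := le_antisymm hDc hDnn
      rw [this, Real.zero_rpow h1α.ne', mul_zero] at key
      exact absurd key (not_le.2 hLpos)
    have hSpos : 0 < S := by
      by_contra hSc
      push_neg at hSc
      have : S = 0 := le_antisymm hSc hSnn
      rw [this, Real.zero_rpow hα0.ne', zero_mul] at key
      exact absurd key (not_le.2 hLpos)
    have step : L ^ (1/α) ≤ S * D ^ ((1-α)/α) := by
      calc L ^ (1/α) ≤ (S ^ α * D ^ (1-α)) ^ (1/α) :=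
            Real.rpow_le_rpow hLnn key (by positivity)
        _ = S * D ^ ((1-α)/α) := by
            rw [Real.mul_rpow (Real.rpow_nonneg hSnn _) (Real.rpow_nonneg hDnn _),
              ← Real.rpow_mul hSnn, ← Real.rpow_mul hDnn, mul_one_div, div_self hα0.ne',
              Real.rpow_one, mul_one_div]
    calc L ^ (1/α) * D ^ ((α-1)/α) ≤ (S * D ^ ((1-α)/α)) * D ^ ((α-1)/α) := by
          apply mul_le_mul_of_nonneg_right step (Real.rpow_nonneg hDnn _)
      _ = S * (D ^ ((1-α)/α) * D ^ ((α-1)/α)) := by ring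
      _ = S := by
          rw [← Real.rpow_add hDpos, show (1-α)/α + (α-1)/α = 0 by ring, Real.rpow_zero, mul_one]

end ScalarLemmas

section MatrixLemmas

variable {m : Type*} [Fintype m] [DecidableEq m]

lemma aux_trace_unitary_diag (U : Matrix.unitaryGroup m ℂ) (v : m → ℂ) :
    ((U : Matrix m m ℂ) * Matrix.diagonal v * star (U : Matrix m m ℂ)).trace = ∑ i, v i := by
  rw [Matrix.trace_mul_cycle, Matrix.mem_unitaryGroup_iff'.mp U.2,
    Matrix.one_mul, Matrix.trace_diagonal]

lemma aux_trace_mul_unitary_diag (ρ : Matrix m m ℂ) (U : Matrix.unitaryGroup m ℂ) (v : m → ℂ) :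
    (ρ * ((U : Matrix m m ℂ) * Matrix.diagonal v * star (U : Matrix m m ℂ))).trace
      = ∑ i, (star (U : Matrix m m ℂ) * ρ * (U : Matrix m m ℂ)) i i * v i := by
  calc (ρ * ((U : Matrix m m ℂ) * Matrix.diagonal v * star (U : Matrix m m ℂ))).trace
      = ((ρ * (U : Matrix m m ℂ)) * Matrix.diagonal v * star (U : Matrix m m ℂ)).trace := by
        rw [← Matrix.mul_assoc, ← Matrix.mul_assoc]
    _ = (star (U : Matrix m m ℂ) * (ρ * (U : Matrix m m ℂ)) * Matrix.diagonal v).trace :=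
        Matrix.trace_mul_cycle (ρ * (U : Matrix m m ℂ)) (Matrix.diagonal v) _
    _ = ((star (U : Matrix m m ℂ) * ρ * (U : Matrix m m ℂ)) * Matrix.diagonal v).trace := by
        rw [← Matrix.mul_assoc]
    _ = ∑ i, (star (U : Matrix m m ℂ) * ρ * (U : Matrix m m ℂ)) i i * v i := by
        simp [Matrix.trace, Matrix.diag, Matrix.mul_diagonal]

lemma aux_diag_re (W : Matrix m m ℂ) (lam : m → ℝ) (i : m) :
    ((W * Matrix.diagonal (fun j => ((lam j : ℝ) : ℂ)) * Wᴴ) i i).re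
      = ∑ j, Complex.normSq (W i j) * lam j := by
  have h1 : (W * Matrix.diagonal (fun j => ((lam j : ℝ) : ℂ)) * Wᴴ) i i
      = ∑ j, ((Complex.normSq (W i j) * lam j : ℝ) : ℂ) := by
    rw [Matrix.mul_apply]
    refine Finset.sum_congr rfl fun j _ => ?_
    rw [Matrix.mul_diagonal, Matrix.conjTranspose_apply, RCLike.star_def,
      mul_comm (W i j) ((lam j : ℂ)), mul_assoc, Complex.mul_conj]
    push_cast
    ring
  rw [h1, ← Complex.ofReal_sum, Complex.ofReal_re]

end MatrixLemmas

set_option maxHeartbeats 1000000 in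
/-- Key Hölder-type inequality: for density matrices `ρ, σ` with `σ` positive definite,
`Tr(ρ σ^{α−1}) ≥ (Tr ρ^α)^{1/α} (Tr σ^α)^{(α−1)/α}` for `0 < α < 1`, with the reverse
inequality for `α > 1`. -/
theorem trace_rpow_holder {n : ℕ} (α : ℝ)
    (ρ σ : Matrix (Fin n) (Fin n) ℂ)
    (hρ : ρ.PosSemidef) (hρ1 : ρ.trace = 1)
    (hσ : σ.PosDef) (hσ1 : σ.trace = 1) :
    ((0 < α ∧ α < 1) →
      ((mRpow ρ α).trace.re) ^ (1/α) * ((mRpow σ α).trace.re) ^ ((α - 1)/α)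
        ≤ (ρ * mRpow σ (α - 1)).trace.re) ∧
    (1 < α →
      (ρ * mRpow σ (α - 1)).trace.re
        ≤ ((mRpow ρ α).trace.re) ^ (1/α) * ((mRpow σ α).trace.re) ^ ((α - 1)/α)) := by
  have hρH : ρ.IsHermitian := hρ.1
  have hσH : σ.IsHermitian := hσ.1
  set U : Matrix (Fin n) (Fin n) ℂ := (hσH.eigenvectorUnitary : Matrix (Fin n) (Fin n) ℂ)
    with hU
  set V : Matrix (Fin n) (Fin n) ℂ := (hρH.eigenvectorUnitary : Matrix (Fin n) (Fin n) ℂ)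
    with hV
  set d : Fin n → ℝ := hσH.eigenvalues with hd
  set lam : Fin n → ℝ := hρH.eigenvalues with hlam
  set W : Matrix (Fin n) (Fin n) ℂ := star U * V with hW
  set w : Fin n → Fin n → ℝ := fun i j => Complex.normSq (W i j) with hw
  have hdpos : ∀ i, 0 < d i := fun i => hσ.eigenvalues_pos i
  have hlamnn : ∀ j, 0 ≤ lam j := fun j => hρ.eigenvalues_nonneg j
  have hwnn : ∀ i j, 0 ≤ w i j := fun i j => Complex.normSq_nonneg _
  -- unitarity facts for W
  have hWW : W * star W = 1 := by
    calc W * star W = star U * (V * star V) * U := by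
          simp only [hW, Matrix.star_mul, star_star, Matrix.mul_assoc]
      _ = 1 := by
          rw [Matrix.mem_unitaryGroup_iff.mp hρH.eigenvectorUnitary.2, Matrix.mul_one,
            Matrix.mem_unitaryGroup_iff'.mp hσH.eigenvectorUnitary.2]
  have hWW' : star W * W = 1 := by
    calc star W * W = star V * (U * star U) * V := by
          simp only [hW, Matrix.star_mul, star_star, Matrix.mul_assoc]
      _ = 1 := by
          rw [Matrix.mem_unitaryGroup_iff.mp hσH.eigenvectorUnitary.2, Matrix.mul_one,
            Matrix.mem_unitaryGroup_iff'.mp hρH.eigenvectorUnitary.2]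
  have hrow : ∀ i, ∑ j, w i j = 1 := by
    intro i
    have h := congrArg (fun M : Matrix (Fin n) (Fin n) ℂ => (M i i).re) hWW
    simp only [Matrix.mul_apply, Matrix.one_apply_eq, Complex.one_re, Complex.re_sum] at h
    rw [← h]
    refine Finset.sum_congr rfl fun j _ => ?_
    rw [Matrix.star_apply, RCLike.star_def, Complex.mul_conj, Complex.ofReal_re]
  have hcol : ∀ j, ∑ i, w i j = 1 := by
    intro j
    have h := congrArg (fun M : Matrix (Fin n) (Fin n) ℂ => (M j j).re) hWW'
    simp only [Matrix.mul_apply, Matrix.one_apply_eq, Complex.one_re, Complex.re_sum] at h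
    rw [← h]
    refine Finset.sum_congr rfl fun i _ => ?_
    rw [Matrix.star_apply, RCLike.star_def, mul_comm, Complex.mul_conj, Complex.ofReal_re]
  -- trace identities
  have trρpow : (mRpow ρ α).trace.re = ∑ j, lam j ^ α := by
    rw [mRpow, dif_pos hρH, aux_trace_unitary_diag hρH.eigenvectorUnitary,
      ← Complex.ofReal_sum, Complex.ofReal_re]
  have trσpow : (mRpow σ α).trace.re = ∑ i, d i ^ α := by
    rw [mRpow, dif_pos hσH, aux_trace_unitary_diag hσH.eigenvectorUnitary,
      ← Complex.ofReal_sum, Complex.ofReal_re]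
  have hM : star U * ρ * U = W * Matrix.diagonal (fun j => ((lam j : ℝ) : ℂ)) * Wᴴ := by
    conv_lhs => rw [hρH.spectral_theorem]
    rw [hW, hU, hV, hlam]
    simp only [← Matrix.star_eq_conjTranspose, Matrix.star_mul, star_star, Matrix.mul_assoc]
    simp only [Unitary.conjStarAlgAut_apply, Unitary.coe_star, Matrix.mul_assoc]
    rfl
  have trS : (ρ * mRpow σ (α - 1)).trace.re = ∑ i, (∑ j, w i j * lam j) * d i ^ (α - 1) := by
    rw [mRpow, dif_pos hσH, aux_trace_mul_unitary_diag ρ hσH.eigenvectorUnitary,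
      Complex.re_sum]
    refine Finset.sum_congr rfl fun i _ => ?_
    have : ((star U * ρ * U) i i).re = ∑ j, w i j * lam j := by
      rw [hM, aux_diag_re]
    rw [← this]
    simp [Complex.mul_re]
    rfl
  -- rewrite sums over pairs
  have hA : ∑ p : Fin n × Fin n, w p.1 p.2 * (lam p.2 * d p.1 ^ (α - 1))
      = ∑ i, (∑ j, w i j * lam j) * d i ^ (α - 1) := by
    rw [Fintype.sum_prod_type]
    refine Finset.sum_congr rfl fun i _ => ?_
    rw [Finset.sum_mul]
    exact Finset.sum_congr rfl fun j _ => by ring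
  have hB : ∑ p : Fin n × Fin n, w p.1 p.2 * lam p.2 ^ α = ∑ j, lam j ^ α := by
    rw [Fintype.sum_prod_type, Finset.sum_comm]
    refine Finset.sum_congr rfl fun j _ => ?_
    dsimp only
    rw [← Finset.sum_mul, hcol j, one_mul]
  have hC : ∑ p : Fin n × Fin n, w p.1 p.2 * d p.1 ^ α = ∑ i, d i ^ α := by
    rw [Fintype.sum_prod_type]
    refine Finset.sum_congr rfl fun i _ => ?_
    dsimp only
    rw [← Finset.sum_mul, hrow i, one_mul]
  constructor
  · rintro ⟨hα0, hα1⟩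
    have key := holder_w_rev (Finset.univ : Finset (Fin n × Fin n)) hα0 hα1
      (fun p => w p.1 p.2) (fun p => lam p.2) (fun p => d p.1)
      (fun p => hwnn p.1 p.2) (fun p => hlamnn p.2) (fun p => hdpos p.1)
    rw [trρpow, trσpow, trS, ← hA, ← hB, ← hC]
    exact key
  · intro hα
    have key := holder_w (Finset.univ : Finset (Fin n × Fin n)) hα
      (fun p => w p.1 p.2) (fun p => lam p.2) (fun p => d p.1)
      (fun p => hwnn p.1 p.2) (fun p => hlamnn p.2) (fun p => (hdpos p.1).le)
    rw [trρpow, trσpow, trS, ← hA, ← hB, ← hC]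
    exact key
end

section
/- Let α > 0 with α ≠ 1, and let ρ and σ be density matrices on ℂ^n with σ positive definite. Then the quantum relative α-entropy is nonnegative: S_α(ρ‖σ) ≥ 0, and S_α(ρ‖σ) = 0 if and only if ρ = σ. -/
open Matrix ComplexOrder

private lemma amgm_le {w a b : ℝ} (hw0 : 0 ≤ w) (hw1 : w ≤ 1) (ha : 0 ≤ a) (hb : 0 ≤ b) :
    a ^ w * b ^ (1 - w) ≤ w * a + (1 - w) * b :=
  Real.geom_mean_le_arith_mean2_weighted hw0 (by linarith) ha hb (by ring)

private lemma amgm_lt {w a b : ℝ} (hw0 : 0 < w) (hw1 : w < 1) (ha : 0 ≤ a) (hb : 0 ≤ b)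
    (hab : a ≠ b) : a ^ w * b ^ (1 - w) < w * a + (1 - w) * b := by
  have h1w : 0 < 1 - w := by linarith
  rcases eq_or_lt_of_le ha with h0 | hapos
  · -- a = 0
    subst h0
    have hbpos : 0 < b := lt_of_le_of_ne hb hab
    rw [Real.zero_rpow hw0.ne', zero_mul, mul_zero, zero_add]
    positivity
  · rcases eq_or_lt_of_le hb with h0 | hbpos
    · subst h0
      rw [Real.zero_rpow h1w.ne', mul_zero, mul_zero, add_zero]
      positivity
    · have key := strictConcaveOn_log_Ioi.2 (Set.mem_Ioi.2 hapos) (Set.mem_Ioi.2 hbpos) hab hw0 h1w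
        (by ring)
      simp only [smul_eq_mul] at key
      have hsum : 0 < w * a + (1 - w) * b := by positivity
      calc a ^ w * b ^ (1 - w) = Real.exp (w * Real.log a + (1 - w) * Real.log b) := by
            rw [Real.exp_add, Real.rpow_def_of_pos hapos, Real.rpow_def_of_pos hbpos]
            ring_nf
        _ < Real.exp (Real.log (w * a + (1 - w) * b)) := Real.exp_lt_exp.2 key
        _ = w * a + (1 - w) * b := Real.exp_log hsum

private lemma amgm_eq {w a : ℝ} (hw0 : 0 < w) (hw1 : w < 1) (ha : 0 ≤ a) :
    a ^ w * a ^ (1 - w) = a := by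
  rw [← Real.rpow_add_of_nonneg ha hw0.le (by linarith)]
  norm_num

private lemma holder_norm {n : ℕ} {w : ℝ} (hw0 : 0 < w) (hw1 : w < 1) {u v : Fin n → ℝ}
    (hu : ∀ i, 0 ≤ u i) (hv : ∀ i, 0 ≤ v i) (hu1 : ∑ i, u i = 1) (hv1 : ∑ i, v i = 1) :
    (∑ i, u i ^ w * v i ^ (1 - w)) ≤ 1 ∧
    ((∑ i, u i ^ w * v i ^ (1 - w)) = 1 ↔ ∀ i, u i = v i) := by
  have hle : ∀ i, u i ^ w * v i ^ (1 - w) ≤ w * u i + (1 - w) * v i := fun i =>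
    amgm_le hw0.le hw1.le (hu i) (hv i)
  have hsum : ∑ i, (w * u i + (1 - w) * v i) = 1 := by
    rw [Finset.sum_add_distrib, ← Finset.mul_sum, ← Finset.mul_sum, hu1, hv1]; ring
  have hmain : (∑ i, u i ^ w * v i ^ (1 - w)) ≤ 1 := by
    calc (∑ i, u i ^ w * v i ^ (1 - w)) ≤ ∑ i, (w * u i + (1 - w) * v i) :=
          Finset.sum_le_sum fun i _ => hle i
      _ = 1 := hsum
  refine ⟨hmain, ?_, ?_⟩
  · intro h i
    by_contra hne
    have hstrict : (∑ i, u i ^ w * v i ^ (1 - w)) < ∑ i, (w * u i + (1 - w) * v i) :=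
      Finset.sum_lt_sum (fun j _ => hle j)
        ⟨i, Finset.mem_univ i, amgm_lt hw0 hw1 (hu i) (hv i) hne⟩
    rw [hsum] at hstrict
    linarith
  · intro h
    calc (∑ i, u i ^ w * v i ^ (1 - w)) = ∑ i, v i := by
          refine Finset.sum_congr rfl fun i _ => ?_
          rw [h i, amgm_eq hw0 hw1 (hv i)]
      _ = 1 := hv1

private lemma holder {n : ℕ} {w : ℝ} (hw0 : 0 < w) (hw1 : w < 1) {x y : Fin n → ℝ}
    (hx : ∀ i, 0 ≤ x i) (hy : ∀ i, 0 ≤ y i) (hX : 0 < ∑ i, x i) (hY : 0 < ∑ i, y i) :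
    (∑ i, x i ^ w * y i ^ (1 - w)) ≤ (∑ i, x i) ^ w * (∑ i, y i) ^ (1 - w) ∧
    ((∑ i, x i ^ w * y i ^ (1 - w)) = (∑ i, x i) ^ w * (∑ i, y i) ^ (1 - w) ↔
      ∀ i, x i * (∑ j, y j) = y i * (∑ j, x j)) := by
  have hXY : 0 < (∑ i, x i) ^ w * (∑ i, y i) ^ (1 - w) := by
    have h1 := Real.rpow_pos_of_pos hX w
    have h2 := Real.rpow_pos_of_pos hY (1 - w)
    positivity
  have hu : ∀ i, 0 ≤ x i / (∑ j, x j) := fun i => div_nonneg (hx i) hX.le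
  have hv : ∀ i, 0 ≤ y i / (∑ j, y j) := fun i => div_nonneg (hy i) hY.le
  have hu1 : ∑ i, x i / (∑ j, x j) = 1 := by rw [← Finset.sum_div, div_self hX.ne']
  have hv1 : ∑ i, y i / (∑ j, y j) = 1 := by rw [← Finset.sum_div, div_self hY.ne']
  obtain ⟨h1, h2⟩ := holder_norm hw0 hw1 hu hv hu1 hv1
  have key : ∀ i, (x i / (∑ j, x j)) ^ w * (y i / (∑ j, y j)) ^ (1 - w) =
      (x i ^ w * y i ^ (1 - w)) / ((∑ j, x j) ^ w * (∑ j, y j) ^ (1 - w)) := by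
    intro i
    rw [Real.div_rpow (hx i) hX.le, Real.div_rpow (hy i) hY.le]
    ring
  simp only [key] at h1 h2
  rw [← Finset.sum_div] at h1 h2
  constructor
  · exact (div_le_one hXY).mp h1
  · rw [div_eq_one_iff_eq hXY.ne'] at h2
    rw [h2]
    constructor
    · intro h i
      have := h i
      rwa [div_eq_div_iff hX.ne' hY.ne'] at this
    · intro h i
      rw [div_eq_div_iff hX.ne' hY.ne']
      exact h i

private lemma rpow_inj {a b z : ℝ} (ha : 0 ≤ a) (hb : 0 ≤ b) (hz : 0 < z) (h : a ^ z = b ^ z) :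
    a = b := by
  rcases lt_trichotomy a b with hlt | he | hlt
  · exact absurd h (ne_of_lt (Real.rpow_lt_rpow ha hlt hz))
  · exact he
  · exact absurd h.symm (ne_of_lt (Real.rpow_lt_rpow hb hlt hz))

private lemma jensen_gt1 {n : ℕ} {α : ℝ} (hα : 1 < α) {D p : Fin n → ℝ}
    (hD : ∀ k, 0 ≤ D k) (hD1 : ∑ k, D k = 1) (hp : ∀ k, 0 ≤ p k) :
    (∑ k, D k * p k) ^ α ≤ (∑ k, D k * p k ^ α) ∧
    ((∑ k, D k * p k) ^ α = (∑ k, D k * p k ^ α) ↔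
      ∀ k, D k ≠ 0 → p k = ∑ j, D j * p j) := by
  have hα0 : (0 : ℝ) < α := by linarith
  have hSnn : 0 ≤ ∑ k, D k * p k ^ α :=
    Finset.sum_nonneg fun k _ => mul_nonneg (hD k) (Real.rpow_nonneg (hp k) α)
  have hrnn : 0 ≤ ∑ k, D k * p k := Finset.sum_nonneg fun k _ => mul_nonneg (hD k) (hp k)
  rcases eq_or_lt_of_le hSnn with h0 | hSpos
  · have hz : ∀ k ∈ Finset.univ, D k * p k ^ α = 0 :=
      (Finset.sum_eq_zero_iff_of_nonneg
        (fun k _ => mul_nonneg (hD k) (Real.rpow_nonneg (hp k) α))).mp h0.symm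
    have hpk : ∀ k, D k ≠ 0 → p k = 0 := by
      intro k hk
      rcases mul_eq_zero.mp (hz k (Finset.mem_univ k)) with h | h
      · exact absurd h hk
      · exact ((Real.rpow_eq_zero_iff_of_nonneg (hp k)).mp h).1
    have hsum0 : ∑ k, D k * p k = 0 := Finset.sum_eq_zero fun k _ => by
      by_cases hk : D k = 0
      · rw [hk, zero_mul]
      · rw [hpk k hk, mul_zero]
    rw [hsum0, ← h0, Real.zero_rpow hα0.ne']
    exact ⟨le_refl 0, ⟨fun _ k hk => hpk k hk, fun _ => rfl⟩⟩
  · have hw0 : 0 < 1 / α := by positivity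
    have hw1 : 1 / α < 1 := by rw [div_lt_one hα0]; linarith
    obtain ⟨h1, h2⟩ := holder (x := fun k => D k * p k ^ α) (y := D) hw0 hw1
      (fun k => mul_nonneg (hD k) (Real.rpow_nonneg (hp k) α)) hD hSpos (by rw [hD1]; norm_num)
    have key : ∀ k, (D k * p k ^ α) ^ (1 / α) * D k ^ (1 - 1 / α) = D k * p k := by
      intro k
      rw [Real.mul_rpow (hD k) (Real.rpow_nonneg (hp k) α), ← Real.rpow_mul (hp k),
        mul_one_div_cancel hα0.ne', Real.rpow_one]
      calc D k ^ (1 / α) * p k * D k ^ (1 - 1 / α)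
          = (D k ^ (1 / α) * D k ^ (1 - 1 / α)) * p k := by ring
        _ = D k * p k := by rw [amgm_eq hw0 hw1 (hD k)]
    simp only [key, hD1, Real.one_rpow, mul_one] at h1 h2
    have hSid : ((∑ k, D k * p k ^ α) ^ (1 / α)) ^ α = ∑ k, D k * p k ^ α := by
      rw [← Real.rpow_mul hSnn, one_div_mul_cancel hα0.ne', Real.rpow_one]
    have hmain : (∑ k, D k * p k) ^ α ≤ ∑ k, D k * p k ^ α := by
      calc (∑ k, D k * p k) ^ α ≤ ((∑ k, D k * p k ^ α) ^ (1 / α)) ^ α :=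
            Real.rpow_le_rpow hrnn h1 hα0.le
        _ = _ := hSid
    refine ⟨hmain, ?_, ?_⟩
    · intro E k hk
      have hcond := h2.mp (by
        rw [← E, ← Real.rpow_mul hrnn, mul_one_div_cancel hα0.ne', Real.rpow_one])
      have hpα : p k ^ α = (∑ j, D j * p j) ^ α := by
        rw [E]
        exact mul_left_cancel₀ hk (hcond k)
      exact rpow_inj (hp k) hrnn hα0 hpα
    · intro hcond
      have hsub : ∑ k, D k * p k ^ α = ∑ k, D k * (∑ j, D j * p j) ^ α := by
        refine Finset.sum_congr rfl fun k _ => ?_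
        by_cases hk : D k = 0
        · rw [hk, zero_mul, zero_mul]
        · rw [hcond k hk]
      rw [hsub, ← Finset.sum_mul, hD1, one_mul]

private lemma jensen_lt1 {n : ℕ} {α : ℝ} (hα0 : 0 < α) (hα : α < 1) {D p : Fin n → ℝ}
    (hD : ∀ k, 0 ≤ D k) (hD1 : ∑ k, D k = 1) (hp : ∀ k, 0 ≤ p k) :
    (∑ k, D k * p k ^ α) ≤ (∑ k, D k * p k) ^ α ∧
    ((∑ k, D k * p k ^ α) = (∑ k, D k * p k) ^ α ↔
      ∀ k, D k ≠ 0 → p k = ∑ j, D j * p j) := by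
  have hrnn : 0 ≤ ∑ k, D k * p k := Finset.sum_nonneg fun k _ => mul_nonneg (hD k) (hp k)
  rcases eq_or_lt_of_le hrnn with h0 | hrpos
  · have hz : ∀ k ∈ Finset.univ, D k * p k = 0 :=
      (Finset.sum_eq_zero_iff_of_nonneg (fun k _ => mul_nonneg (hD k) (hp k))).mp h0.symm
    have hpk : ∀ k, D k ≠ 0 → p k = 0 := by
      intro k hk
      rcases mul_eq_zero.mp (hz k (Finset.mem_univ k)) with h | h
      · exact absurd h hk
      · exact h
    have hsum0 : ∑ k, D k * p k ^ α = 0 := Finset.sum_eq_zero fun k _ => by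
      by_cases hk : D k = 0
      · rw [hk, zero_mul]
      · rw [hpk k hk, Real.zero_rpow hα0.ne', mul_zero]
    rw [hsum0, ← h0, Real.zero_rpow hα0.ne']
    exact ⟨le_refl 0, ⟨fun _ k hk => hpk k hk, fun _ => rfl⟩⟩
  · obtain ⟨h1, h2⟩ := holder (x := fun k => D k * p k) (y := D) hα0 hα
      (fun k => mul_nonneg (hD k) (hp k)) hD hrpos (by rw [hD1]; norm_num)
    have key : ∀ k, (D k * p k) ^ α * D k ^ (1 - α) = D k * p k ^ α := by
      intro k
      rw [Real.mul_rpow (hD k) (hp k)]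
      calc D k ^ α * p k ^ α * D k ^ (1 - α)
          = (D k ^ α * D k ^ (1 - α)) * p k ^ α := by ring
        _ = D k * p k ^ α := by rw [amgm_eq hα0 hα (hD k)]
    simp only [key, hD1, Real.one_rpow, mul_one] at h1 h2
    refine ⟨h1, ?_⟩
    rw [h2]
    constructor
    · intro h k hk
      exact mul_left_cancel₀ hk (h k)
    · intro h k
      by_cases hk : D k = 0
      · rw [hk, zero_mul, zero_mul]
      · rw [h k hk]
private lemma two_nonneg_zero {a b c c' : ℝ} (hc : 0 < c) (hc' : 0 < c') (ha : 0 ≤ a)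
    (hb : 0 ≤ b) (h : c * a + c' * b = 0) : a = 0 ∧ b = 0 := by
  have h1 : 0 ≤ c * a := mul_nonneg hc.le ha
  have h2 : 0 ≤ c' * b := mul_nonneg hc'.le hb
  have ha0 : c * a = 0 := by linarith
  have hb0 : c' * b = 0 := by linarith
  refine ⟨?_, ?_⟩
  · rcases mul_eq_zero.mp ha0 with h | h
    · exact absurd h hc.ne'
    · exact h
  · rcases mul_eq_zero.mp hb0 with h | h
    · exact absurd h hc'.ne'
    · exact h

private lemma trace_conj_diag {n : ℕ} {U : Matrix (Fin n) (Fin n) ℂ}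
    (hU : star U * U = 1) (d : Fin n → ℂ) :
    (U * Matrix.diagonal d * star U).trace = ∑ i, d i := by
  rw [Matrix.trace_mul_cycle, hU, one_mul, Matrix.trace_diagonal]

private lemma trace_mul_diag {n : ℕ} (M : Matrix (Fin n) (Fin n) ℂ) (d : Fin n → ℂ) :
    (M * Matrix.diagonal d).trace = ∑ i, M i i * d i := by
  simp [Matrix.trace, Matrix.diag, Matrix.mul_diagonal]

private lemma mRpow_eq {n : ℕ} {A : Matrix (Fin n) (Fin n) ℂ} (hA : A.IsHermitian) (t : ℝ) :
    mRpow A t = (hA.eigenvectorUnitary : Matrix (Fin n) (Fin n) ℂ) *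
      Matrix.diagonal (fun i => ((hA.eigenvalues i ^ t : ℝ) : ℂ)) *
      star (hA.eigenvectorUnitary : Matrix (Fin n) (Fin n) ℂ) := by
  simp only [mRpow]
  rw [dif_pos hA]

/-- Nonnegativity of the quantum relative α-entropy, with equality iff the states agree. -/
theorem Salpha_nonneg_and_eq_zero_iff {n : ℕ} (α : ℝ) (hα : 0 < α) (hα1 : α ≠ 1)
    (ρ σ : Matrix (Fin n) (Fin n) ℂ)
    (hρ : ρ.PosSemidef) (hρ1 : ρ.trace = 1)
    (hσ : σ.PosDef) (hσ1 : σ.trace = 1) :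
    0 ≤ Salpha α ρ σ ∧ (Salpha α ρ σ = 0 ↔ ρ = σ) := by
  have hσH : σ.IsHermitian := hσ.1
  have hρH : ρ.IsHermitian := hρ.1
  set q : Fin n → ℝ := hσH.eigenvalues with hqdef
  set p : Fin n → ℝ := hρH.eigenvalues with hpdef
  set U : Matrix (Fin n) (Fin n) ℂ := (hσH.eigenvectorUnitary : Matrix (Fin n) (Fin n) ℂ)
    with hUdef
  set V : Matrix (Fin n) (Fin n) ℂ := (hρH.eigenvectorUnitary : Matrix (Fin n) (Fin n) ℂ)
    with hVdef
  have hqpos : ∀ i, 0 < q i := fun i => hσ.eigenvalues_pos i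
  have hpnn : ∀ k, 0 ≤ p k := fun k => hρ.eigenvalues_nonneg k
  have hU2 : star U * U = 1 := mem_unitaryGroup_iff'.mp hσH.eigenvectorUnitary.2
  have hU1 : U * star U = 1 := mem_unitaryGroup_iff.mp hσH.eigenvectorUnitary.2
  have hV2 : star V * V = 1 := mem_unitaryGroup_iff'.mp hρH.eigenvectorUnitary.2
  have hV1 : V * star V = 1 := mem_unitaryGroup_iff.mp hρH.eigenvectorUnitary.2
  have h1a : (1 : ℝ) - α ≠ 0 := sub_ne_zero.2 fun h => hα1 h.symm
  have hα1' : α - 1 ≠ 0 := sub_ne_zero.2 hα1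
  -- traces of Hermitian matrices are sums of eigenvalues
  have htrace : ∀ (A : Matrix (Fin n) (Fin n) ℂ) (hA : A.IsHermitian),
      A.trace = ((∑ i, hA.eigenvalues i : ℝ) : ℂ) := by
    intro A hA
    have hu : star (hA.eigenvectorUnitary : Matrix (Fin n) (Fin n) ℂ) *
        (hA.eigenvectorUnitary : Matrix (Fin n) (Fin n) ℂ) = 1 :=
      mem_unitaryGroup_iff'.mp hA.eigenvectorUnitary.2
    conv_lhs => rw [hA.spectral_theorem, Unitary.conjStarAlgAut_apply]
    rw [trace_conj_diag hu, Complex.ofReal_sum]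
    rfl
  have hq1 : ∑ i, q i = 1 := by
    have h := htrace σ hσH
    rw [hσ1] at h
    exact_mod_cast h.symm
  have hp1 : ∑ k, p k = 1 := by
    have h := htrace ρ hρH
    rw [hρ1] at h
    exact_mod_cast h.symm
  set W : Matrix (Fin n) (Fin n) ℂ := star U * V with hWdef
  have hWs : star W = star V * U := by rw [hWdef, Matrix.star_mul, star_star]
  have hW1 : W * star W = 1 := by
    rw [hWdef, hWs, Matrix.mul_assoc, ← Matrix.mul_assoc V, hV1, one_mul, hU2]
  have hW2 : star W * W = 1 := by
    rw [hWdef, hWs, Matrix.mul_assoc, ← Matrix.mul_assoc U, hU1, one_mul, hV2]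
  set D : Fin n → Fin n → ℝ := fun i k => Complex.normSq (W i k) with hDdef
  have hDnn : ∀ i k, 0 ≤ D i k := fun i k => Complex.normSq_nonneg _
  have hDrow : ∀ i, ∑ k, D i k = 1 := by
    intro i
    have h' : ((∑ j, D i j : ℝ) : ℂ) = 1 := by
      calc ((∑ j, D i j : ℝ) : ℂ) = ∑ j, W i j * (star W) j i := by
            rw [Complex.ofReal_sum]
            refine Finset.sum_congr rfl fun j _ => ?_
            rw [Matrix.star_apply, Complex.star_def, Complex.mul_conj]
        _ = (1 : Matrix (Fin n) (Fin n) ℂ) i i := by rw [← Matrix.mul_apply, hW1]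
        _ = 1 := Matrix.one_apply_eq i
    exact_mod_cast h'
  have hDcol : ∀ k, ∑ i, D i k = 1 := by
    intro k
    have h' : ((∑ j, D j k : ℝ) : ℂ) = 1 := by
      calc ((∑ j, D j k : ℝ) : ℂ) = ∑ j, (star W) k j * W j k := by
            rw [Complex.ofReal_sum]
            refine Finset.sum_congr rfl fun j _ => ?_
            rw [Matrix.star_apply, Complex.star_def, mul_comm, Complex.mul_conj]
        _ = (1 : Matrix (Fin n) (Fin n) ℂ) k k := by rw [← Matrix.mul_apply, hW2]
        _ = 1 := Matrix.one_apply_eq k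
    exact_mod_cast h'
  set r : Fin n → ℝ := fun i => ∑ k, D i k * p k with hrdef
  have hrnn : ∀ i, 0 ≤ r i := fun i =>
    Finset.sum_nonneg fun k _ => mul_nonneg (hDnn i k) (hpnn k)
  have hr1 : ∑ i, r i = 1 := by
    show ∑ i, (∑ k, D i k * p k) = 1
    calc ∑ i, (∑ k, D i k * p k) = ∑ k, ∑ i, D i k * p k := Finset.sum_comm
      _ = ∑ k, (∑ i, D i k) * p k := by
          refine Finset.sum_congr rfl fun k _ => ?_
          rw [Finset.sum_mul]
      _ = ∑ k, p k := by
          refine Finset.sum_congr rfl fun k _ => ?_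
          rw [hDcol k, one_mul]
      _ = 1 := hp1
  -- conjugated density matrix
  have hρU : star U * ρ * U = W * Matrix.diagonal (RCLike.ofReal ∘ p) * star W := by
    conv_lhs => rw [hρH.spectral_theorem, Unitary.conjStarAlgAut_apply]
    rw [hWdef, hWs, ← hVdef, ← hpdef]
    simp only [Matrix.mul_assoc]
  have hentry : ∀ i j, (star U * ρ * U) i j
      = ∑ k, W i k * ((p k : ℝ) : ℂ) * (starRingEnd ℂ) (W j k) := by
    intro i j
    rw [hρU, Matrix.mul_apply]
    refine Finset.sum_congr rfl fun k _ => ?_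
    rw [Matrix.mul_diagonal, Matrix.star_apply, Complex.star_def]
    rfl
  have hdiagval : ∀ i, (star U * ρ * U) i i = ((r i : ℝ) : ℂ) := by
    intro i
    rw [hentry i i]
    calc ∑ k, W i k * ((p k : ℝ) : ℂ) * (starRingEnd ℂ) (W i k)
        = ∑ k, ((D i k * p k : ℝ) : ℂ) := by
          refine Finset.sum_congr rfl fun k _ => ?_
          rw [mul_right_comm, Complex.mul_conj]
          push_cast
          ring
      _ = ((r i : ℝ) : ℂ) := by
          rw [← Complex.ofReal_sum]
  -- the three trace quantities
  have hT1 : (ρ * mRpow σ (α - 1)).trace.re = ∑ i, r i * q i ^ (α - 1) := by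
    rw [mRpow_eq hσH (α - 1), ← hUdef, ← hqdef]
    rw [show ρ * (U * Matrix.diagonal (fun i => ((q i ^ (α - 1) : ℝ) : ℂ)) * star U)
        = (ρ * U * Matrix.diagonal (fun i => ((q i ^ (α - 1) : ℝ) : ℂ))) * star U by
      simp only [Matrix.mul_assoc]]
    rw [Matrix.trace_mul_comm]
    rw [show star U * (ρ * U * Matrix.diagonal (fun i => ((q i ^ (α - 1) : ℝ) : ℂ)))
        = (star U * ρ * U) * Matrix.diagonal (fun i => ((q i ^ (α - 1) : ℝ) : ℂ)) by
      simp only [Matrix.mul_assoc]]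
    rw [trace_mul_diag]
    rw [show ∑ i, (star U * ρ * U) i i * ((q i ^ (α - 1) : ℝ) : ℂ)
        = ((∑ i, r i * q i ^ (α - 1) : ℝ) : ℂ) by
      rw [Complex.ofReal_sum]
      refine Finset.sum_congr rfl fun i _ => ?_
      rw [hdiagval i]
      push_cast
      ring]
    rw [Complex.ofReal_re]
  have hT2 : (mRpow ρ α).trace.re = ∑ k, p k ^ α := by
    rw [mRpow_eq hρH α, ← hVdef, ← hpdef, trace_conj_diag hV2, ← Complex.ofReal_sum,
      Complex.ofReal_re]
  have hT3 : (mRpow σ α).trace.re = ∑ i, q i ^ α := by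
    rw [mRpow_eq hσH α, ← hUdef, ← hqdef, trace_conj_diag hU2, ← Complex.ofReal_sum,
      Complex.ofReal_re]
  -- positivity
  have hex_r : ∃ i, 0 < r i := by
    by_contra h
    push_neg at h
    have h0 : (1 : ℝ) ≤ 0 := hr1 ▸ Finset.sum_nonpos fun i _ => h i
    linarith
  obtain ⟨i₀, hi₀⟩ := hex_r
  have hex_p : ∃ k, 0 < p k := by
    by_contra h
    push_neg at h
    have h0 : (1 : ℝ) ≤ 0 := hp1 ▸ Finset.sum_nonpos fun k _ => h k
    linarith
  obtain ⟨k₀, hk₀⟩ := hex_p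
  have hT1pos : 0 < ∑ i, r i * q i ^ (α - 1) :=
    Finset.sum_pos' (fun i _ => mul_nonneg (hrnn i) (Real.rpow_nonneg (hqpos i).le _))
      ⟨i₀, Finset.mem_univ i₀, mul_pos hi₀ (Real.rpow_pos_of_pos (hqpos i₀) _)⟩
  have hT2rpos : 0 < ∑ i, r i ^ α :=
    Finset.sum_pos' (fun i _ => Real.rpow_nonneg (hrnn i) α)
      ⟨i₀, Finset.mem_univ i₀, Real.rpow_pos_of_pos hi₀ α⟩
  have hT2ppos : 0 < ∑ k, p k ^ α :=
    Finset.sum_pos' (fun k _ => Real.rpow_nonneg (hpnn k) α)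
      ⟨k₀, Finset.mem_univ k₀, Real.rpow_pos_of_pos hk₀ α⟩
  have hT3pos : 0 < ∑ i, q i ^ α :=
    Finset.sum_pos (fun i _ => Real.rpow_pos_of_pos (hqpos i) α) ⟨i₀, Finset.mem_univ i₀⟩
  have hs_sum : ∑ i, ∑ k, D i k * p k ^ α = ∑ k, p k ^ α := by
    rw [Finset.sum_comm]
    refine Finset.sum_congr rfl fun k _ => ?_
    rw [← Finset.sum_mul, hDcol k, one_mul]
  -- reconstruction of ρ from equality conditions
  have hfinal : (∀ i, r i = q i) → (∀ i k, D i k ≠ 0 → p k = r i) → ρ = σ := by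
    intro hrq hJcond
    have hdiag : star U * ρ * U = Matrix.diagonal (RCLike.ofReal ∘ q) := by
      ext i j
      rw [hentry i j]
      rw [Finset.sum_congr rfl (fun k _ => show W i k * ((p k : ℝ) : ℂ) * (starRingEnd ℂ) (W j k)
          = ((r j : ℝ) : ℂ) * (W i k * (starRingEnd ℂ) (W j k)) by
        by_cases hk : W j k = 0
        · rw [hk]
          simp
        · have hD : D j k ≠ 0 := fun h => hk (Complex.normSq_eq_zero.mp h)
          rw [hJcond j k hD]
          ring)]
      rw [← Finset.mul_sum]
      have hWW : ∑ k, W i k * (starRingEnd ℂ) (W j k) = (1 : Matrix (Fin n) (Fin n) ℂ) i j := by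
        have h := congrFun (congrFun hW1 i) j
        rw [Matrix.mul_apply] at h
        rw [← h]
        refine Finset.sum_congr rfl fun k _ => ?_
        rw [Matrix.star_apply, Complex.star_def]
      rw [hWW]
      by_cases hij : i = j
      · subst hij
        rw [Matrix.one_apply_eq, mul_one, hrq i, Matrix.diagonal_apply_eq]
        rfl
      · rw [Matrix.one_apply_ne hij, Matrix.diagonal_apply_ne _ hij, mul_zero]
    have hrec : ρ = U * (star U * ρ * U) * star U := by
      calc ρ = 1 * ρ * 1 := by rw [one_mul, mul_one]
        _ = (U * star U) * ρ * (U * star U) := by rw [hU1]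
        _ = U * (star U * ρ * U) * star U := by simp only [Matrix.mul_assoc]
    rw [hrec, hdiag]
    conv_rhs => rw [hσH.spectral_theorem, Unitary.conjStarAlgAut_apply]
  -- the backward implication
  have hmpr : ρ = σ → Salpha α ρ σ = 0 := by
    rintro rfl
    have hVU : V = U := rfl
    have hpq : p = q := rfl
    have hWone : W = 1 := by rw [hWdef, hVU, hU2]
    have hrq : ∀ i, r i = q i := by
      intro i
      show ∑ k, D i k * p k = q i
      rw [Finset.sum_congr rfl (fun k _ => show D i k * p k
          = (if i = k then 1 else 0) * q k by
        rw [hpq]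
        congr 1
        show Complex.normSq (W i k) = _
        rw [hWone]
        by_cases h : i = k
        · subst h
          rw [Matrix.one_apply_eq, if_pos rfl]
          simp
        · rw [Matrix.one_apply_ne h, if_neg h]
          simp)]
      simp
    have e1 : ∑ i, r i * q i ^ (α - 1) = ∑ i, q i ^ α := by
      refine Finset.sum_congr rfl fun i _ => ?_
      rw [hrq i]
      calc q i * q i ^ (α - 1) = q i ^ (1 : ℝ) * q i ^ (α - 1) := by rw [Real.rpow_one]
        _ = q i ^ (1 + (α - 1)) := (Real.rpow_add (hqpos i) _ _).symm
        _ = q i ^ α := by norm_num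
    have e2 : ∑ k, p k ^ α = ∑ i, q i ^ α := by rw [hpq]
    simp only [Salpha]
    rw [hT1, hT2, e1, e2]
    field_simp
    ring
  -- main inequality and forward implication, by cases on α
  have hkey : 0 ≤ Salpha α ρ σ ∧ (Salpha α ρ σ = 0 → ρ = σ) := by
    rcases lt_or_gt_of_ne hα1 with hlt | hgt
    · -- case α < 1
      obtain ⟨hH1, hH2⟩ := holder (w := α) (x := fun i => r i * q i ^ (α - 1))
        (y := fun i => q i ^ α) hα hlt
        (fun i => mul_nonneg (hrnn i) (Real.rpow_nonneg (hqpos i).le _))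
        (fun i => Real.rpow_nonneg (hqpos i).le α) hT1pos hT3pos
      have keyH : ∀ i, (r i * q i ^ (α - 1)) ^ α * (q i ^ α) ^ (1 - α) = r i ^ α := by
        intro i
        rw [Real.mul_rpow (hrnn i) (Real.rpow_nonneg (hqpos i).le _),
          ← Real.rpow_mul (hqpos i).le, ← Real.rpow_mul (hqpos i).le, mul_assoc,
          ← Real.rpow_add (hqpos i)]
        rw [show (α - 1) * α + α * (1 - α) = 0 by ring, Real.rpow_zero, mul_one]
      simp only [keyH] at hH1 hH2
      have hJ : ∀ i, (∑ k, D i k * p k ^ α) ≤ r i ^ α ∧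
          ((∑ k, D i k * p k ^ α) = r i ^ α ↔ ∀ k, D i k ≠ 0 → p k = ∑ j, D i j * p j) :=
        fun i => jensen_lt1 hα hlt (hDnn i) (hDrow i) hpnn
      have hsum_le : (∑ k, p k ^ α) ≤ ∑ i, r i ^ α := by
        rw [← hs_sum]
        exact Finset.sum_le_sum fun i _ => (hJ i).1
      have hB1pos : 0 < (∑ i, r i * q i ^ (α - 1)) ^ α * (∑ i, q i ^ α) ^ (1 - α) :=
        mul_pos (Real.rpow_pos_of_pos hT1pos α) (Real.rpow_pos_of_pos hT3pos (1 - α))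
      have hd1 : 0 ≤ Real.log ((∑ i, r i * q i ^ (α - 1)) ^ α * (∑ i, q i ^ α) ^ (1 - α))
          - Real.log (∑ i, r i ^ α) :=
        sub_nonneg.2 ((Real.log_le_log_iff hT2rpos hB1pos).2 hH1)
      have hd2 : 0 ≤ Real.log (∑ i, r i ^ α) - Real.log (∑ k, p k ^ α) :=
        sub_nonneg.2 ((Real.log_le_log_iff hT2ppos hT2rpos).2 hsum_le)
      have hlogB1 : Real.log ((∑ i, r i * q i ^ (α - 1)) ^ α * (∑ i, q i ^ α) ^ (1 - α))
          = α * Real.log (∑ i, r i * q i ^ (α - 1)) + (1 - α) * Real.log (∑ i, q i ^ α) := by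
        rw [Real.log_mul (Real.rpow_pos_of_pos hT1pos α).ne'
          (Real.rpow_pos_of_pos hT3pos (1 - α)).ne', Real.log_rpow hT1pos, Real.log_rpow hT3pos]
      have hc : (0 : ℝ) < 1 / (1 - α) := one_div_pos.mpr (by linarith)
      have hSdecomp : Salpha α ρ σ =
          (1 / (1 - α)) * (Real.log ((∑ i, r i * q i ^ (α - 1)) ^ α * (∑ i, q i ^ α) ^ (1 - α))
            - Real.log (∑ i, r i ^ α))
          + (1 / (1 - α)) * (Real.log (∑ i, r i ^ α) - Real.log (∑ k, p k ^ α)) := by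
        simp only [Salpha]
        rw [hT1, hT2, hT3, hlogB1]
        field_simp
        ring
      constructor
      · rw [hSdecomp]
        exact add_nonneg (mul_nonneg hc.le hd1) (mul_nonneg hc.le hd2)
      · intro hS0
        rw [hSdecomp] at hS0
        obtain ⟨hz1, hz2⟩ := two_nonneg_zero hc hc hd1 hd2 hS0
        have hEq1 : (∑ i, r i ^ α) = (∑ i, r i * q i ^ (α - 1)) ^ α * (∑ i, q i ^ α) ^ (1 - α) := by
          rcases eq_or_lt_of_le hH1 with h | h
          · exact h
          · exact absurd (by linarith : Real.log (∑ i, r i ^ α) = Real.log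
              ((∑ i, r i * q i ^ (α - 1)) ^ α * (∑ i, q i ^ α) ^ (1 - α)))
              (ne_of_lt (Real.log_lt_log hT2rpos h))
        have hEq2 : (∑ k, p k ^ α) = ∑ i, r i ^ α := by
          rcases eq_or_lt_of_le hsum_le with h | h
          · exact h
          · exact absurd (by linarith : Real.log (∑ k, p k ^ α) = Real.log (∑ i, r i ^ α))
              (ne_of_lt (Real.log_lt_log hT2ppos h))
        have hterm : ∀ i ∈ Finset.univ, (∑ k, D i k * p k ^ α) = r i ^ α :=
          (Finset.sum_eq_sum_iff_of_le (fun i _ => (hJ i).1)).mp (by rw [hs_sum]; exact hEq2)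
        have hJcond : ∀ i k, D i k ≠ 0 → p k = r i :=
          fun i => (hJ i).2.mp (hterm i (Finset.mem_univ i))
        have hcond1 := hH2.mp hEq1
        have hsplit : ∀ i, q i ^ α = q i * q i ^ (α - 1) := by
          intro i
          calc q i ^ α = q i ^ (1 + (α - 1)) := by norm_num
            _ = q i ^ (1 : ℝ) * q i ^ (α - 1) := Real.rpow_add (hqpos i) _ _
            _ = q i * q i ^ (α - 1) := by rw [Real.rpow_one]
        have hri : ∀ i, r i * (∑ j, q j ^ α) = q i * (∑ j, r j * q j ^ (α - 1)) := by
          intro i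
          have h := hcond1 i
          rw [hsplit i] at h
          have hq' : q i ^ (α - 1) ≠ 0 := (Real.rpow_pos_of_pos (hqpos i) _).ne'
          apply mul_right_cancel₀ hq'
          linear_combination h
        have hT3T1 : (∑ j, q j ^ α) = ∑ j, r j * q j ^ (α - 1) := by
          have hs := Finset.sum_congr rfl fun i (_ : i ∈ Finset.univ) => hri i
          rw [← Finset.sum_mul, ← Finset.sum_mul, hr1, hq1, one_mul, one_mul] at hs
          exact hs
        have hrq : ∀ i, r i = q i := by
          intro i
          have h := hri i
          rw [← hT3T1] at h
          exact mul_right_cancel₀ hT3pos.ne' h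
        exact hfinal hrq hJcond
    · -- case α > 1
      have hw0 : 0 < 1 / α := one_div_pos.mpr hα
      have hw1 : 1 / α < 1 := by rw [div_lt_one hα]; linarith
      obtain ⟨hH1, hH2⟩ := holder (w := 1 / α) (x := fun i => r i ^ α)
        (y := fun i => q i ^ α) hw0 hw1
        (fun i => Real.rpow_nonneg (hrnn i) α)
        (fun i => Real.rpow_nonneg (hqpos i).le α) hT2rpos hT3pos
      have keyH : ∀ i, (r i ^ α) ^ (1 / α) * (q i ^ α) ^ (1 - 1 / α) = r i * q i ^ (α - 1) := by
        intro i
        rw [← Real.rpow_mul (hrnn i), ← Real.rpow_mul (hqpos i).le,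
          mul_one_div_cancel hα.ne', Real.rpow_one]
        congr 1
        field_simp
      simp only [keyH] at hH1 hH2
      have hJ : ∀ i, r i ^ α ≤ (∑ k, D i k * p k ^ α) ∧
          (r i ^ α = (∑ k, D i k * p k ^ α) ↔ ∀ k, D i k ≠ 0 → p k = ∑ j, D i j * p j) :=
        fun i => jensen_gt1 hgt (hDnn i) (hDrow i) hpnn
      have hsum_le : (∑ i, r i ^ α) ≤ ∑ k, p k ^ α := by
        rw [← hs_sum]
        exact Finset.sum_le_sum fun i _ => (hJ i).1
      have hB1pos : 0 < (∑ i, r i ^ α) ^ (1 / α) * (∑ i, q i ^ α) ^ (1 - 1 / α) :=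
        mul_pos (Real.rpow_pos_of_pos hT2rpos (1 / α)) (Real.rpow_pos_of_pos hT3pos (1 - 1 / α))
      have hd1 : 0 ≤ Real.log ((∑ i, r i ^ α) ^ (1 / α) * (∑ i, q i ^ α) ^ (1 - 1 / α))
          - Real.log (∑ i, r i * q i ^ (α - 1)) :=
        sub_nonneg.2 ((Real.log_le_log_iff hT1pos hB1pos).2 hH1)
      have hd2 : 0 ≤ Real.log (∑ k, p k ^ α) - Real.log (∑ i, r i ^ α) :=
        sub_nonneg.2 ((Real.log_le_log_iff hT2rpos hT2ppos).2 hsum_le)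
      have hlogB1 : Real.log ((∑ i, r i ^ α) ^ (1 / α) * (∑ i, q i ^ α) ^ (1 - 1 / α))
          = (1 / α) * Real.log (∑ i, r i ^ α) + (1 - 1 / α) * Real.log (∑ i, q i ^ α) := by
        rw [Real.log_mul (Real.rpow_pos_of_pos hT2rpos (1 / α)).ne'
          (Real.rpow_pos_of_pos hT3pos (1 - 1 / α)).ne', Real.log_rpow hT2rpos,
          Real.log_rpow hT3pos]
      have hc1 : (0 : ℝ) < α / (α - 1) := by
        apply div_pos hα
        linarith
      have hc2 : (0 : ℝ) < 1 / (α - 1) := one_div_pos.mpr (by linarith)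
      have hSdecomp : Salpha α ρ σ =
          (α / (α - 1)) * (Real.log ((∑ i, r i ^ α) ^ (1 / α) * (∑ i, q i ^ α) ^ (1 - 1 / α))
            - Real.log (∑ i, r i * q i ^ (α - 1)))
          + (1 / (α - 1)) * (Real.log (∑ k, p k ^ α) - Real.log (∑ i, r i ^ α)) := by
        simp only [Salpha]
        rw [hT1, hT2, hT3, hlogB1]
        field_simp
        ring
      constructor
      · rw [hSdecomp]
        exact add_nonneg (mul_nonneg hc1.le hd1) (mul_nonneg hc2.le hd2)
      · intro hS0
        rw [hSdecomp] at hS0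
        obtain ⟨hz1, hz2⟩ := two_nonneg_zero hc1 hc2 hd1 hd2 hS0
        have hEq1 : (∑ i, r i * q i ^ (α - 1))
            = (∑ i, r i ^ α) ^ (1 / α) * (∑ i, q i ^ α) ^ (1 - 1 / α) := by
          rcases eq_or_lt_of_le hH1 with h | h
          · exact h
          · exact absurd (by linarith : Real.log (∑ i, r i * q i ^ (α - 1)) = Real.log
              ((∑ i, r i ^ α) ^ (1 / α) * (∑ i, q i ^ α) ^ (1 - 1 / α)))
              (ne_of_lt (Real.log_lt_log hT1pos h))
        have hEq2 : (∑ i, r i ^ α) = ∑ k, p k ^ α := by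
          rcases eq_or_lt_of_le hsum_le with h | h
          · exact h
          · exact absurd (by linarith : Real.log (∑ i, r i ^ α) = Real.log (∑ k, p k ^ α))
              (ne_of_lt (Real.log_lt_log hT2rpos h))
        have hterm : ∀ i ∈ Finset.univ, r i ^ α = (∑ k, D i k * p k ^ α) :=
          (Finset.sum_eq_sum_iff_of_le (fun i _ => (hJ i).1)).mp (by rw [hs_sum]; exact hEq2)
        have hJcond : ∀ i k, D i k ≠ 0 → p k = r i :=
          fun i => (hJ i).2.mp (hterm i (Finset.mem_univ i))
        have hcond1 := hH2.mp hEq1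
        -- r i ^ α * T3 = q i ^ α * T2r
        have hcpos : 0 < (∑ j, r j ^ α) / (∑ j, q j ^ α) := div_pos hT2rpos hT3pos
        have hri : ∀ i, r i = ((∑ j, r j ^ α) / (∑ j, q j ^ α)) ^ (1 / α) * q i := by
          intro i
          apply rpow_inj (hrnn i)
            (mul_nonneg (Real.rpow_nonneg hcpos.le _) (hqpos i).le) hα
          rw [Real.mul_rpow (Real.rpow_nonneg hcpos.le _) (hqpos i).le,
            ← Real.rpow_mul hcpos.le, one_div_mul_cancel hα.ne', Real.rpow_one]
          rw [div_mul_eq_mul_div, eq_div_iff hT3pos.ne']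
          linear_combination hcond1 i
        have hcone : ((∑ j, r j ^ α) / (∑ j, q j ^ α)) ^ (1 / α) = 1 := by
          have hs : (1 : ℝ) = ((∑ j, r j ^ α) / (∑ j, q j ^ α)) ^ (1 / α) * 1 := by
            calc (1 : ℝ) = ∑ i, r i := hr1.symm
              _ = ∑ i, ((∑ j, r j ^ α) / (∑ j, q j ^ α)) ^ (1 / α) * q i :=
                Finset.sum_congr rfl fun i _ => hri i
              _ = ((∑ j, r j ^ α) / (∑ j, q j ^ α)) ^ (1 / α) * ∑ i, q i := by
                rw [Finset.mul_sum]
              _ = ((∑ j, r j ^ α) / (∑ j, q j ^ α)) ^ (1 / α) * 1 := by rw [hq1]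
          linarith
        have hrq : ∀ i, r i = q i := fun i => by rw [hri i, hcone, one_mul]
        exact hfinal hrq hJcond
  exact ⟨hkey.1, ⟨hkey.2, hmpr⟩⟩
end

section
/- Let α > 0 with α ≠ 1, and let ρ, σ be density matrices on ℂ^n and τ, ω be density matrices on ℂ^m, with σ and ω positive definite. Then the quantum relative α-entropy is additive under Kronecker (tensor) products: S_α(ρ ⊗ τ ‖ σ ⊗ ω) = S_α(ρ‖σ) + S_α(τ‖ω). -/
open Matrix ComplexOrder

namespace SalphaAux

open Kronecker

variable {ι κ : Type*} [Fintype ι] [DecidableEq ι] [Fintype κ] [DecidableEq κ]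

lemma aux_herm (U : Matrix ι ι ℂ) (d : ι → ℝ) :
    (U * Matrix.diagonal (fun i => (d i : ℂ)) * star U).IsHermitian := by
  have hD : (Matrix.diagonal (fun i => (d i : ℂ)))ᴴ = Matrix.diagonal (fun i => (d i : ℂ)) := by
    rw [Matrix.diagonal_conjTranspose]
    have : (star fun i => ((d i : ℝ) : ℂ)) = fun i => ((d i : ℝ) : ℂ) := by
      funext i
      simp only [Pi.star_apply]
      exact Complex.conj_ofReal (d i)
    rw [this]
  show _ᴴ = _
  simp only [Matrix.star_eq_conjTranspose, Matrix.conjTranspose_mul,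
    Matrix.conjTranspose_conjTranspose, hD, Matrix.mul_assoc]

/-- Well-definedness of the matrix real power: any unitary diagonalization computes it. -/
lemma mRpow_rep {A U : Matrix ι ι ℂ} (hU : U ∈ Matrix.unitaryGroup ι ℂ) (d : ι → ℝ)
    (hrep : A = U * Matrix.diagonal (fun i => (d i : ℂ)) * star U) (r : ℝ) :
    mRpow A r = U * Matrix.diagonal (fun i => ((d i ^ r : ℝ) : ℂ)) * star U := by
  have hU1 : star U * U = 1 := (Unitary.mem_iff.mp hU).1
  have hU2 : U * star U = 1 := (Unitary.mem_iff.mp hU).2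
  have hA : A.IsHermitian := hrep ▸ aux_herm U d
  have hV1 : star (hA.eigenvectorUnitary : Matrix ι ι ℂ) * (hA.eigenvectorUnitary : Matrix ι ι ℂ) = 1 :=
    (Unitary.mem_iff.mp hA.eigenvectorUnitary.2).1
  have hV2 : (hA.eigenvectorUnitary : Matrix ι ι ℂ) * star (hA.eigenvectorUnitary : Matrix ι ι ℂ) = 1 :=
    (Unitary.mem_iff.mp hA.eigenvectorUnitary.2).2
  set V : Matrix ι ι ℂ := (hA.eigenvectorUnitary : Matrix ι ι ℂ) with hVdef
  set W : Matrix ι ι ℂ := star U * V with hW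
  have key : W * Matrix.diagonal (RCLike.ofReal ∘ hA.eigenvalues)
      = Matrix.diagonal (fun i => (d i : ℂ)) * W := by
    have h1 : star U * A * V = W * Matrix.diagonal (RCLike.ofReal ∘ hA.eigenvalues) := by
      conv_lhs => rw [hA.spectral_theorem]
      simp only [hW, Unitary.conjStarAlgAut_apply, ← Matrix.mul_assoc]
      rw [Matrix.mul_assoc (star U * V * _), hV1, Matrix.mul_one]
    have h2 : star U * A * V = Matrix.diagonal (fun i => (d i : ℂ)) * W := by
      conv_lhs => rw [hrep]
      simp only [hW, ← Matrix.mul_assoc]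
      rw [hU1, Matrix.one_mul]
    rw [← h1, h2]
  have hent : ∀ i j, W i j * (hA.eigenvalues j : ℂ) = (d i : ℂ) * W i j := by
    intro i j
    have := congrFun (congrFun key i) j
    simpa [Matrix.mul_diagonal, Matrix.diagonal_mul, Function.comp] using this
  have key2 : W * Matrix.diagonal (fun i => ((hA.eigenvalues i ^ r : ℝ) : ℂ))
      = Matrix.diagonal (fun i => ((d i ^ r : ℝ) : ℂ)) * W := by
    ext i j
    rw [Matrix.mul_diagonal, Matrix.diagonal_mul]
    by_cases h : W i j = 0
    · simp [h]
    · have h3 : (hA.eigenvalues j : ℂ) = (d i : ℂ) := by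
        have h5 := hent i j
        rw [mul_comm (W i j)] at h5
        exact mul_right_cancel₀ h h5
      have h4 : hA.eigenvalues j = d i := by exact_mod_cast h3
      rw [h4, mul_comm]
  rw [mRpow, dif_pos hA]
  have hUW : U * W = V := by rw [hW, ← Matrix.mul_assoc, hU2, Matrix.one_mul]
  have hWV : W * star V = star U := by rw [hW, Matrix.mul_assoc, hV2, Matrix.mul_one]
  calc V * Matrix.diagonal (fun i => ((hA.eigenvalues i ^ r : ℝ) : ℂ)) * star V
      = U * (W * Matrix.diagonal (fun i => ((hA.eigenvalues i ^ r : ℝ) : ℂ))) * star V := by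
        rw [← Matrix.mul_assoc, hUW]
    _ = U * Matrix.diagonal (fun i => ((d i ^ r : ℝ) : ℂ)) * (W * star V) := by
        rw [key2]; simp only [Matrix.mul_assoc]
    _ = U * Matrix.diagonal (fun i => ((d i ^ r : ℝ) : ℂ)) * star U := by rw [hWV]

lemma kron_conjTranspose (A : Matrix ι ι ℂ) (B : Matrix κ κ ℂ) :
    (A ⊗ₖ B)ᴴ = Aᴴ ⊗ₖ Bᴴ := by
  ext ⟨i, j⟩ ⟨k, l⟩
  simp [Matrix.conjTranspose_apply, Matrix.kroneckerMap_apply, mul_comm]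

lemma kron_mem_unitary {U : Matrix ι ι ℂ} {V : Matrix κ κ ℂ}
    (hU : U ∈ Matrix.unitaryGroup ι ℂ) (hV : V ∈ Matrix.unitaryGroup κ ℂ) :
    U ⊗ₖ V ∈ Matrix.unitaryGroup (ι × κ) ℂ := by
  rw [Matrix.mem_unitaryGroup_iff, Matrix.star_eq_conjTranspose, kron_conjTranspose,
    ← Matrix.mul_kronecker_mul,
    show U * Uᴴ = 1 from (Unitary.mem_iff.mp hU).2,
    show V * Vᴴ = 1 from (Unitary.mem_iff.mp hV).2, Matrix.one_kronecker_one]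

lemma mRpow_kron {A : Matrix ι ι ℂ} {B : Matrix κ κ ℂ}
    (hA : A.PosSemidef) (hB : B.PosSemidef) (r : ℝ) :
    mRpow (A ⊗ₖ B) r = mRpow A r ⊗ₖ mRpow B r := by
  have hAh := hA.1
  have hBh := hB.1
  set U : Matrix ι ι ℂ := (hAh.eigenvectorUnitary : Matrix ι ι ℂ) with hUdef
  set V : Matrix κ κ ℂ := (hBh.eigenvectorUnitary : Matrix κ κ ℂ) with hVdef
  have hUk : U ⊗ₖ V ∈ Matrix.unitaryGroup (ι × κ) ℂ :=
    kron_mem_unitary hAh.eigenvectorUnitary.2 hBh.eigenvectorUnitary.2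
  have hkr : ∀ (a : ι → ℝ) (b : κ → ℝ),
      (U * Matrix.diagonal (fun i => ((a i : ℝ) : ℂ)) * star U) ⊗ₖ
        (V * Matrix.diagonal (fun j => ((b j : ℝ) : ℂ)) * star V)
      = (U ⊗ₖ V) * Matrix.diagonal (fun p : ι × κ => ((a p.1 * b p.2 : ℝ) : ℂ)) *
          star (U ⊗ₖ V) := by
    intro a b
    rw [Matrix.star_eq_conjTranspose (U ⊗ₖ V), kron_conjTranspose,
      Matrix.mul_kronecker_mul, Matrix.mul_kronecker_mul, Matrix.diagonal_kronecker_diagonal]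
    congr 2
    funext p
    push_cast
    ring
  have hrep : A ⊗ₖ B = (U ⊗ₖ V) *
      Matrix.diagonal (fun p : ι × κ => ((hAh.eigenvalues p.1 * hBh.eigenvalues p.2 : ℝ) : ℂ)) *
      star (U ⊗ₖ V) := by
    conv_lhs => rw [hAh.spectral_theorem, hBh.spectral_theorem]
    exact hkr _ _
  rw [mRpow_rep hUk _ hrep r]
  have eA : mRpow A r = U * Matrix.diagonal (fun i => ((hAh.eigenvalues i ^ r : ℝ) : ℂ)) * star U := by
    rw [mRpow, dif_pos hAh]
  have eB : mRpow B r = V * Matrix.diagonal (fun j => ((hBh.eigenvalues j ^ r : ℝ) : ℂ)) * star V := by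
    rw [mRpow, dif_pos hBh]
  have hfun : (fun p : ι × κ => (((hAh.eigenvalues p.1 * hBh.eigenvalues p.2) ^ r : ℝ) : ℂ))
      = fun p : ι × κ => ((hAh.eigenvalues p.1 ^ r * hBh.eigenvalues p.2 ^ r : ℝ) : ℂ) := by
    funext p
    rw [Real.mul_rpow (hA.eigenvalues_nonneg _) (hB.eigenvalues_nonneg _)]
  rw [eA, eB, hkr, hfun]

lemma isHermitian_mRpow (A : Matrix ι ι ℂ) (r : ℝ) : (mRpow A r).IsHermitian := by
  rw [mRpow]
  split_ifs with hA
  · exact aux_herm _ _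
  · exact Matrix.isHermitian_zero

lemma trace_im_zero {A : Matrix ι ι ℂ} (hA : A.IsHermitian) : A.trace.im = 0 := by
  have h := Matrix.trace_conjTranspose A
  rw [hA.eq] at h
  exact Complex.conj_eq_iff_im.mp h.symm

lemma trace_mul_im_zero {A B : Matrix ι ι ℂ} (hA : A.IsHermitian) (hB : B.IsHermitian) :
    (A * B).trace.im = 0 := by
  have h := Matrix.trace_conjTranspose (A * B)
  rw [Matrix.conjTranspose_mul, hA.eq, hB.eq, Matrix.trace_mul_comm] at h
  exact Complex.conj_eq_iff_im.mp h.symm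

lemma trace_unitary_diag {U : Matrix ι ι ℂ} (hU : U ∈ Matrix.unitaryGroup ι ℂ) (d : ι → ℝ) :
    (U * Matrix.diagonal (fun i => (d i : ℂ)) * star U).trace = ((∑ i, d i : ℝ) : ℂ) := by
  rw [Matrix.trace_mul_cycle, (Unitary.mem_iff.mp hU).1, Matrix.one_mul,
    Matrix.trace_diagonal]
  push_cast
  ring

lemma trace_mRpow {A : Matrix ι ι ℂ} (hA : A.IsHermitian) (r : ℝ) :
    (mRpow A r).trace = ((∑ i, hA.eigenvalues i ^ r : ℝ) : ℂ) := by
  rw [mRpow, dif_pos hA]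
  exact trace_unitary_diag hA.eigenvectorUnitary.2 _

lemma sum_eigenvalues_eq {A : Matrix ι ι ℂ} (hA : A.IsHermitian) :
    ((∑ i, hA.eigenvalues i : ℝ) : ℂ) = A.trace := by
  conv_rhs => rw [hA.spectral_theorem]
  exact (trace_unitary_diag hA.eigenvectorUnitary.2 _).symm

lemma trace_mRpow_re_pos {A : Matrix ι ι ℂ} (hA : A.PosSemidef) (h1 : A.trace = 1) (r : ℝ) :
    0 < (mRpow A r).trace.re := by
  rw [trace_mRpow hA.1, Complex.ofReal_re]
  have hsum : ∑ i, hA.1.eigenvalues i = 1 := by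
    have h := sum_eigenvalues_eq hA.1
    rw [h1] at h
    exact_mod_cast h
  have hex : ∃ i, 0 < hA.1.eigenvalues i := by
    by_contra hc
    push_neg at hc
    have : ∑ i, hA.1.eigenvalues i ≤ 0 := Finset.sum_nonpos (fun i _ => hc i)
    rw [hsum] at this
    linarith
  obtain ⟨i, hi⟩ := hex
  exact Finset.sum_pos' (fun j _ => Real.rpow_nonneg (hA.eigenvalues_nonneg j) r)
    ⟨i, Finset.mem_univ i, Real.rpow_pos_of_pos hi r⟩

lemma trace_mul_mRpow_re_pos {A B : Matrix ι ι ℂ} (hA : A.PosSemidef) (h1 : A.trace = 1)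
    (hB : B.PosDef) (r : ℝ) : 0 < (A * mRpow B r).trace.re := by
  have hBh := hB.1
  rw [mRpow, dif_pos hBh]
  set U : Matrix ι ι ℂ := (hBh.eigenvectorUnitary : Matrix ι ι ℂ) with hUdef
  have hU1 : star U * U = 1 := (Unitary.mem_iff.mp hBh.eigenvectorUnitary.2).1
  have hU2 : U * star U = 1 := (Unitary.mem_iff.mp hBh.eigenvectorUnitary.2).2
  set M : Matrix ι ι ℂ := star U * A * U with hM
  have htr : (A * (U * Matrix.diagonal (fun i => ((hBh.eigenvalues i ^ r : ℝ) : ℂ)) * star U)).trace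
      = ∑ i, M i i * ((hBh.eigenvalues i ^ r : ℝ) : ℂ) := by
    have e1 : A * (U * Matrix.diagonal (fun i => ((hBh.eigenvalues i ^ r : ℝ) : ℂ)) * star U)
        = (A * U * Matrix.diagonal (fun i => ((hBh.eigenvalues i ^ r : ℝ) : ℂ))) * star U := by
      simp only [Matrix.mul_assoc]
    rw [e1, Matrix.trace_mul_comm]
    have e2 : star U * (A * U * Matrix.diagonal (fun i => ((hBh.eigenvalues i ^ r : ℝ) : ℂ)))
        = M * Matrix.diagonal (fun i => ((hBh.eigenvalues i ^ r : ℝ) : ℂ)) := by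
      simp only [hM, Matrix.mul_assoc]
    rw [e2]
    simp [Matrix.trace, Matrix.diag, Matrix.mul_diagonal]
  rw [htr]
  have hre : (∑ i, M i i * ((hBh.eigenvalues i ^ r : ℝ) : ℂ)).re
      = ∑ i, (M i i).re * (hBh.eigenvalues i ^ r) := by
    rw [Complex.re_sum]
    congr 1
    funext i
    simp [Complex.mul_re]
  rw [hre]
  have hMpsd : M.PosSemidef := by
    have := hA.conjTranspose_mul_mul_same U
    simpa [hM, Matrix.star_eq_conjTranspose] using this
  have hdiag : ∀ i, 0 ≤ (M i i).re := by
    intro i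
    have h := hMpsd.re_dotProduct_nonneg (Pi.single i 1)
    simpa [dotProduct, Matrix.mulVec, Pi.single_apply, Finset.sum_ite_eq,
      Finset.sum_ite_eq'] using h
  have hsum : ∑ i, (M i i).re = 1 := by
    have hMtr : M.trace = 1 := by
      rw [hM, Matrix.trace_mul_cycle, hU2, Matrix.one_mul, h1]
    have := congrArg Complex.re hMtr
    rw [Matrix.trace] at this
    simpa [Complex.re_sum, Matrix.diag] using this
  have hex : ∃ i, 0 < (M i i).re := by
    by_contra hc
    push_neg at hc
    have : ∑ i, (M i i).re ≤ 0 := Finset.sum_nonpos (fun i _ => hc i)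
    rw [hsum] at this
    linarith
  obtain ⟨i, hi⟩ := hex
  exact Finset.sum_pos'
    (fun j _ => mul_nonneg (hdiag j) (Real.rpow_pos_of_pos (hB.eigenvalues_pos j) r).le)
    ⟨i, Finset.mem_univ i, mul_pos hi (Real.rpow_pos_of_pos (hB.eigenvalues_pos i) r)⟩

end SalphaAux

open Kronecker in
/-- Additivity of the quantum relative α-entropy under Kronecker (tensor) products. -/
theorem Salpha_kronecker_additive {n m : ℕ} (α : ℝ) (hα : 0 < α) (hα1 : α ≠ 1)
    (ρ σ : Matrix (Fin n) (Fin n) ℂ) (τ ω : Matrix (Fin m) (Fin m) ℂ)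
    (hρ : ρ.PosSemidef) (hρ1 : ρ.trace = 1)
    (hσ : σ.PosDef) (hσ1 : σ.trace = 1)
    (hτ : τ.PosSemidef) (hτ1 : τ.trace = 1)
    (hω : ω.PosDef) (hω1 : ω.trace = 1) :
    Salpha α (ρ ⊗ₖ τ) (σ ⊗ₖ ω) = Salpha α ρ σ + Salpha α τ ω := by
  open SalphaAux in
  have hσp := hσ.posSemidef
  have hωp := hω.posSemidef
  have t1 : ((ρ ⊗ₖ τ) * mRpow (σ ⊗ₖ ω) (α - 1)).trace
      = (ρ * mRpow σ (α - 1)).trace * (τ * mRpow ω (α - 1)).trace := by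
    rw [mRpow_kron hσp hωp, ← Matrix.mul_kronecker_mul, Matrix.trace_kronecker]
  have t2 : (mRpow (ρ ⊗ₖ τ) α).trace = (mRpow ρ α).trace * (mRpow τ α).trace := by
    rw [mRpow_kron hρ hτ, Matrix.trace_kronecker]
  have t3 : (mRpow (σ ⊗ₖ ω) α).trace = (mRpow σ α).trace * (mRpow ω α).trace := by
    rw [mRpow_kron hσp hωp, Matrix.trace_kronecker]
  have i1 : (ρ * mRpow σ (α - 1)).trace.im = 0 :=
    trace_mul_im_zero hρ.1 (isHermitian_mRpow σ _)
  have i1' : (τ * mRpow ω (α - 1)).trace.im = 0 :=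
    trace_mul_im_zero hτ.1 (isHermitian_mRpow ω _)
  have i2 : (mRpow ρ α).trace.im = 0 := trace_im_zero (isHermitian_mRpow ρ _)
  have i2' : (mRpow τ α).trace.im = 0 := trace_im_zero (isHermitian_mRpow τ _)
  have i3 : (mRpow σ α).trace.im = 0 := trace_im_zero (isHermitian_mRpow σ _)
  have i3' : (mRpow ω α).trace.im = 0 := trace_im_zero (isHermitian_mRpow ω _)
  have p1 : 0 < (ρ * mRpow σ (α - 1)).trace.re := trace_mul_mRpow_re_pos hρ hρ1 hσ _
  have p1' : 0 < (τ * mRpow ω (α - 1)).trace.re := trace_mul_mRpow_re_pos hτ hτ1 hω _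
  have p2 : 0 < (mRpow ρ α).trace.re := trace_mRpow_re_pos hρ hρ1 _
  have p2' : 0 < (mRpow τ α).trace.re := trace_mRpow_re_pos hτ hτ1 _
  have p3 : 0 < (mRpow σ α).trace.re := trace_mRpow_re_pos hσp hσ1 _
  have p3' : 0 < (mRpow ω α).trace.re := trace_mRpow_re_pos hωp hω1 _
  unfold Salpha
  rw [t1, t2, t3, Complex.mul_re, Complex.mul_re, Complex.mul_re, i1, i2, i3,
    zero_mul, zero_mul, zero_mul, sub_zero, sub_zero, sub_zero,
    Real.log_mul p1.ne' p1'.ne', Real.log_mul p2.ne' p2'.ne', Real.log_mul p3.ne' p3'.ne']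
  ring
end

section
/- Let ρ, σ, τ, ω be pairwise commuting positive definite density matrices on ℂ^n, let t ∈ [0,1], and let α > 1. Define ‖A‖_α = (Tr A^α)^{1/α}, M_{ρ,σ}^t = ρ^t σ^{1−t} / Tr(ρ^t σ^{1−t}), and Z_{ρ,σ}^t = Tr[ ( (ρ/‖ρ‖_α)^t (σ/‖σ‖_α)^{1−t} )^α ]. Then S_α(M_{ρ,σ}^t ‖ M_{τ,ω}^t) ≥ t·S_α(ρ‖τ) + (1−t)·S_α(σ‖ω) + (1/(α−1))·log Z_{ρ,σ}^t + log Z_{τ,ω}^t. -/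
open Matrix ComplexOrder

/-- The Schatten α-norm `‖A‖_α = (Tr A^α)^{1/α}`. -/
noncomputable def schattenNorm {m : Type*} [Fintype m] [DecidableEq m]
    (α : ℝ) (A : Matrix m m ℂ) : ℝ :=
  ((mRpow A α).trace.re) ^ (1/α)

/-- The generalized mixture `M_{ρ,σ}^t = ρ^t σ^{1−t} / Tr(ρ^t σ^{1−t})`. -/
noncomputable def genMix {m : Type*} [Fintype m] [DecidableEq m]
    (t : ℝ) (ρ σ : Matrix m m ℂ) : Matrix m m ℂ :=
  ((mRpow ρ t * mRpow σ (1 - t)).trace)⁻¹ • (mRpow ρ t * mRpow σ (1 - t))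

/-- The normalization factor `Z_{ρ,σ}^t = Tr[((ρ/‖ρ‖_α)^t (σ/‖σ‖_α)^{1−t})^α]`. -/
noncomputable def Zfactor {m : Type*} [Fintype m] [DecidableEq m]
    (α t : ℝ) (ρ σ : Matrix m m ℂ) : ℝ :=
  (mRpow (mRpow ((Complex.ofReal (schattenNorm α ρ))⁻¹ • ρ) t *
      mRpow ((Complex.ofReal (schattenNorm α σ))⁻¹ • σ) (1 - t)) α).trace.re

section Helpers
variable {n : Type*} [Fintype n] [DecidableEq n]

/-- Conjugation by an invertible matrix as an algebra homomorphism. -/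
noncomputable def conjAlgHom (V W : Matrix n n ℂ) (hVW : V * W = 1) (hWV : W * V = 1) :
    Matrix n n ℂ →ₐ[ℂ] Matrix n n ℂ where
  toFun X := V * X * W
  map_one' := by show V * 1 * W = 1; rw [Matrix.mul_one, hVW]
  map_mul' X Y := by
    show V * (X * Y) * W = (V * X * W) * (V * Y * W)
    simp only [Matrix.mul_assoc]
    rw [← Matrix.mul_assoc W V, hWV, Matrix.one_mul]
  map_zero' := by show V * 0 * W = 0; simp
  map_add' X Y := by show V * (X + Y) * W = V * X * W + V * Y * W; noncomm_ring
  commutes' c := by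
    show V * (algebraMap ℂ (Matrix n n ℂ) c) * W = _
    simp [Algebra.algebraMap_eq_smul_one, Matrix.mul_smul, Matrix.smul_mul, hVW]

lemma conjAlgHom_apply (V W : Matrix n n ℂ) (hVW : V * W = 1) (hWV : W * V = 1) (X) :
    conjAlgHom V W hVW hWV X = V * X * W := rfl

lemma aeval_diagonal (P : Polynomial ℂ) (c : n → ℂ) :
    Polynomial.aeval (Matrix.diagonal c) P = Matrix.diagonal (fun i => P.eval (c i)) := by
  induction P using Polynomial.induction_on' with
  | add p q hp hq =>
      simp only [map_add, hp, hq, Polynomial.eval_add, Matrix.diagonal_add]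
  | monomial k a =>
      simp [Polynomial.aeval_monomial, Polynomial.eval_monomial, Matrix.diagonal_pow,
        Matrix.algebraMap_eq_diagonal, Matrix.diagonal_mul_diagonal]

/-- Interpolation: there is a complex polynomial matching any real function on a finite set. -/
lemma exists_interp (s : Finset ℝ) (f : ℝ → ℝ) :
    ∃ P : Polynomial ℂ, ∀ x ∈ s, P.eval (x : ℂ) = ((f x : ℝ) : ℂ) := by
  refine ⟨Lagrange.interpolate s (fun x : ℝ => (x : ℂ)) (fun x => ((f x : ℝ) : ℂ)), ?_⟩
  intro x hx
  exact Lagrange.eval_interpolate_at_node _ (fun a _ b _ h => Complex.ofReal_inj.mp h) hx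

/-- Functional calculus: `mRpow` is independent of the (possibly non-unitary) diagonalization. -/
lemma mRpow_eq_conj {A : Matrix n n ℂ} (hA : A.IsHermitian) {V W : Matrix n n ℂ}
    (hVW : V * W = 1) (hWV : W * V = 1) {c : n → ℝ}
    (hAeq : A = V * Matrix.diagonal (fun i => ((c i : ℝ) : ℂ)) * W) (r : ℝ) :
    mRpow A r = V * Matrix.diagonal (fun i => ((c i ^ r : ℝ) : ℂ)) * W := by
  classical
  set U : Matrix n n ℂ := (hA.eigenvectorUnitary : Matrix n n ℂ) with hU
  have h1 : U * star U = 1 := (Matrix.mem_unitaryGroup_iff).mp hA.eigenvectorUnitary.2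
  have h2 : star U * U = 1 := (Matrix.mem_unitaryGroup_iff').mp hA.eigenvectorUnitary.2
  obtain ⟨P, hP⟩ := exists_interp
    ((Finset.image hA.eigenvalues Finset.univ) ∪ (Finset.image c Finset.univ))
    (fun x => x ^ r)
  have e1 : Polynomial.aeval A P = mRpow A r := by
    conv_lhs => rw [hA.spectral_theorem]
    simp only [Unitary.conjStarAlgAut_apply, Unitary.coe_star, ← hU]
    rw [← conjAlgHom_apply U (star U) h1 h2, Polynomial.aeval_algHom_apply, aeval_diagonal,
      conjAlgHom_apply]
    rw [mRpow, dif_pos hA]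
    refine congrArg₂ _ (congrArg₂ _ rfl (congrArg Matrix.diagonal (funext fun i => ?_))) rfl
    exact hP _ (Finset.mem_union_left _ (Finset.mem_image_of_mem _ (Finset.mem_univ i)))
  have e2 : Polynomial.aeval A P = V * Matrix.diagonal (fun i => ((c i ^ r : ℝ) : ℂ)) * W := by
    conv_lhs => rw [hAeq]
    rw [← conjAlgHom_apply V W hVW hWV, Polynomial.aeval_algHom_apply, aeval_diagonal,
      conjAlgHom_apply]
    refine congrArg₂ _ (congrArg₂ _ rfl (congrArg Matrix.diagonal (funext fun i => ?_))) rfl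
    exact hP _ (Finset.mem_union_right _ (Finset.mem_image_of_mem _ (Finset.mem_univ i)))
  rw [← e2, e1]

end Helpers

section MatrixHelpers
variable {n : Type*} [Fintype n] [DecidableEq n]

lemma mRpow_isHermitian (A : Matrix n n ℂ) (r : ℝ) : (mRpow A r).IsHermitian := by
  unfold mRpow
  split
  · rename_i hA
    have hd : (Matrix.diagonal (fun i => ((hA.eigenvalues i ^ r : ℝ) : ℂ))).IsHermitian := by
      rw [Matrix.isHermitian_diagonal_iff]
      intro i
      exact Complex.conj_ofReal _
    exact Matrix.isHermitian_mul_mul_conjTranspose _ hd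
  · exact Matrix.isHermitian_zero

lemma herm_mul {X Y : Matrix n n ℂ} (hX : X.IsHermitian) (hY : Y.IsHermitian)
    (h : X * Y = Y * X) : (X * Y).IsHermitian := by
  rw [Matrix.IsHermitian, Matrix.conjTranspose_mul, hX.eq, hY.eq, ← h]

lemma herm_smul {X : Matrix n n ℂ} (hX : X.IsHermitian) (r : ℝ) :
    (((r : ℝ) : ℂ) • X).IsHermitian := by
  rw [Matrix.IsHermitian, Matrix.conjTranspose_smul, hX.eq, Complex.star_def,
    Complex.conj_ofReal]

variable {V W : Matrix n n ℂ}

lemma VDW_mul_real (hWV : W * V = 1) (f g : n → ℝ) :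
    (V * Matrix.diagonal (fun i => ((f i : ℝ) : ℂ)) * W)
      * (V * Matrix.diagonal (fun i => ((g i : ℝ) : ℂ)) * W)
    = V * Matrix.diagonal (fun i => ((f i * g i : ℝ) : ℂ)) * W := by
  simp only [Matrix.mul_assoc]
  rw [← Matrix.mul_assoc W V, hWV, Matrix.one_mul,
    ← Matrix.mul_assoc (Matrix.diagonal _) (Matrix.diagonal _) W,
    Matrix.diagonal_mul_diagonal]
  congr 2
  funext i
  push_cast
  rfl

lemma VDW_trace_c (hWV : W * V = 1) (f : n → ℝ) :
    (V * Matrix.diagonal (fun i => ((f i : ℝ) : ℂ)) * W).trace = ((∑ i, f i : ℝ) : ℂ) := by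
  rw [Matrix.trace_mul_comm, ← Matrix.mul_assoc, hWV, Matrix.one_mul, Matrix.trace_diagonal]
  push_cast
  rfl

lemma VDW_trace_re (hWV : W * V = 1) (f : n → ℝ) :
    (V * Matrix.diagonal (fun i => ((f i : ℝ) : ℂ)) * W).trace.re = ∑ i, f i := by
  rw [VDW_trace_c hWV, Complex.ofReal_re]

lemma VDW_smul_real (f : n → ℝ) (z : ℝ) :
    ((z : ℝ) : ℂ) • (V * Matrix.diagonal (fun i => ((f i : ℝ) : ℂ)) * W)
      = V * Matrix.diagonal (fun i => ((z * f i : ℝ) : ℂ)) * W := by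
  have h1 : V * (((z : ℝ) : ℂ) • Matrix.diagonal fun i => ((f i : ℝ) : ℂ)) * W
      = ((z : ℝ) : ℂ) • (V * (Matrix.diagonal fun i => ((f i : ℝ) : ℂ)) * W) := by
    rw [Matrix.mul_smul, Matrix.smul_mul]
  rw [← h1, ← Matrix.diagonal_smul]
  refine congrArg₂ _ (congrArg₂ _ rfl (congrArg Matrix.diagonal (funext fun i => ?_))) rfl
  simp only [Pi.smul_apply, smul_eq_mul]
  push_cast
  ring

lemma VDW_comm (hWV : W * V = 1) {X Y : Matrix n n ℂ} {f g : n → ℝ}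
    (hX : X = V * Matrix.diagonal (fun i => ((f i : ℝ) : ℂ)) * W)
    (hY : Y = V * Matrix.diagonal (fun i => ((g i : ℝ) : ℂ)) * W) :
    X * Y = Y * X := by
  rw [hX, hY, VDW_mul_real hWV, VDW_mul_real hWV]
  congr 2
  funext i
  norm_num [mul_comm]

end MatrixHelpers

lemma toEuclideanLin_commute {N : ℕ} (A B : Matrix (Fin N) (Fin N) ℂ) (h : A * B = B * A) :
    Commute (Matrix.toEuclideanLin A) (Matrix.toEuclideanLin B) := by
  have key : ∀ (X Y : Matrix (Fin N) (Fin N) ℂ),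
      (Matrix.toEuclideanLin X * Matrix.toEuclideanLin Y) = Matrix.toEuclideanLin (X * Y) := by
    intro X Y
    ext x i
    simp [Matrix.toEuclideanLin_apply, Matrix.mulVec_mulVec, Module.End.mul_apply]
  unfold Commute SemiconjBy
  rw [key, key, h]

lemma simul_diag {N : ℕ} (M : Fin 4 → Matrix (Fin N) (Fin N) ℂ)
    (hPD : ∀ j, (M j).PosDef)
    (hC : ∀ j k, M j * M k = M k * M j) :
    ∃ (V W : Matrix (Fin N) (Fin N) ℂ) (d : Fin 4 → Fin N → ℝ),
      V * W = 1 ∧ W * V = 1 ∧ (∀ j i, 0 < d j i) ∧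
      (∀ j, M j = V * Matrix.diagonal (fun i => ((d j i : ℝ) : ℂ)) * W) := by
  classical
  set T : Fin 4 → Module.End ℂ (EuclideanSpace ℂ (Fin N)) :=
    fun j => Matrix.toEuclideanLin (M j) with hT
  have hsym : ∀ j, (T j).IsSymmetric := fun j =>
    (Matrix.isHermitian_iff_isSymmetric).mp (hPD j).1
  have hcomm : Pairwise (Function.onFun Commute T) := fun j k _ => toEuclideanLin_commute _ _ (hC j k)
  have hsp : (⨆ χ : Fin 4 → ℂ, ⨅ j, Module.End.eigenspace (T j) (χ j)) = ⊤ :=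
    LinearMap.IsSymmetric.iSup_iInf_eq_top_of_commute hsym hcomm
  set S : Set (EuclideanSpace ℂ (Fin N)) :=
    ⋃ χ : Fin 4 → ℂ, ((⨅ j, Module.End.eigenspace (T j) (χ j)) : Submodule ℂ _) with hS
  have hspan : Submodule.span ℂ S = ⊤ := by
    rw [hS, ← Submodule.iSup_eq_span, hsp]
  obtain ⟨b, hbS, hbspan, hbind⟩ := exists_linearIndependent ℂ S
  have hbfin : b.Finite := hbind.setFinite
  have : Fintype b := hbfin.fintype
  let B : Module.Basis b ℂ (EuclideanSpace ℂ (Fin N)) := Module.Basis.mk hbind (by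
    rw [Subtype.range_coe, hbspan, hspan])
  have hcard : Fintype.card b = N := by
    have h1 := Module.finrank_eq_card_basis B
    rw [finrank_euclideanSpace] at h1
    simpa using h1.symm
  let e : b ≃ Fin N := Fintype.equivFinOfCardEq hcard
  let v : Module.Basis (Fin N) ℂ (EuclideanSpace ℂ (Fin N)) := B.reindex e
  have hvS : ∀ i, (v i : EuclideanSpace ℂ (Fin N)) ∈ S := by
    intro i
    have : v i = B (e.symm i) := by simp [v]
    rw [this, Module.Basis.mk_apply]
    exact hbS (e.symm i).2
  -- choose joint eigenvalues
  have hex : ∀ i, ∃ χ : Fin 4 → ℂ, ∀ j, (M j).mulVec (v i) = χ j • (v i : Fin N → ℂ) := by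
    intro i
    obtain ⟨χ, hmem⟩ := Set.mem_iUnion.mp (hvS i)
    refine ⟨χ, fun j => ?_⟩
    have h2 : v i ∈ Module.End.eigenspace (T j) (χ j) := (Submodule.mem_iInf _).mp hmem j
    have h3 : T j (v i) = χ j • v i := Module.End.mem_eigenspace_iff.mp h2
    -- translate to mulVec
    have h4 := congrArg (WithLp.equiv 2 (Fin N → ℂ)) h3
    simpa [hT, Matrix.ofLp_toEuclideanLin_apply] using h4
  choose χ hχ using hex
  -- eigenvalues are real and positive
  have hreal : ∀ i j, 0 < (χ i j).re ∧ (χ i j).im = 0 := by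
    intro i j
    have hx0 : (v i : Fin N → ℂ) ≠ 0 := by
      have := v.ne_zero i
      intro h; apply this
      ext k; exact congrFun h k
    have hz := (hPD j).dotProduct_mulVec_pos hx0
    rw [hχ i j] at hz
    have hc : (star (v i : Fin N → ℂ)) ⬝ᵥ (χ i j • (v i : Fin N → ℂ))
        = χ i j * ((star (v i : Fin N → ℂ)) ⬝ᵥ (v i : Fin N → ℂ)) := by
      rw [dotProduct_smul, smul_eq_mul]
    rw [hc] at hz
    set creal : ℝ := ∑ k, Complex.normSq ((v i : Fin N → ℂ) k) with hcreal
    have hcc : (star (v i : Fin N → ℂ)) ⬝ᵥ (v i : Fin N → ℂ) = (creal : ℂ) := by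
      simp only [dotProduct, Pi.star_apply, hcreal, Complex.ofReal_sum]
      refine Finset.sum_congr rfl fun k _ => ?_
      rw [RCLike.star_def, ← Complex.normSq_eq_conj_mul_self]
    rw [hcc] at hz
    rw [Complex.lt_def] at hz
    obtain ⟨hzre, hzim⟩ := hz
    simp only [Complex.zero_re, Complex.zero_im, Complex.mul_re, Complex.mul_im,
      Complex.ofReal_re, Complex.ofReal_im, mul_zero, zero_mul, add_zero, sub_zero] at hzre hzim
    -- hzre : 0 < (χ i j).re * creal ; hzim : (χ i j).im * creal = 0
    have hcnn : 0 ≤ creal := Finset.sum_nonneg fun k _ => Complex.normSq_nonneg _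
    have hcpos : 0 < creal := by
      rcases eq_or_lt_of_le hcnn with h | h
      · rw [← h, mul_zero] at hzre; exact absurd hzre (lt_irrefl 0)
      · exact h
    have him : (χ i j).im * creal = 0 := by linarith
    constructor
    · nlinarith [hzre, hcpos]
    · rcases mul_eq_zero.mp him with h | h
      · exact h
      · exact absurd h (ne_of_gt hcpos)
  -- the change-of-basis matrix
  let b0 : Module.Basis (Fin N) ℂ (EuclideanSpace ℂ (Fin N)) := (EuclideanSpace.basisFun (Fin N) ℂ).toBasis
  let V : Matrix (Fin N) (Fin N) ℂ := b0.toMatrix v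
  have : Invertible V := b0.invertibleToMatrix v
  refine ⟨V, ⅟V, fun j i => (χ i j).re, mul_invOf_self V, invOf_mul_self V,
    fun j i => (hreal i j).1, fun j => ?_⟩
  have hVapp : ∀ k i, V k i = (v i : Fin N → ℂ) k := by
    intro k i
    simp [V, b0, Module.Basis.toMatrix_apply, EuclideanSpace.basisFun_repr]
  have hχr : ∀ i, (((χ i j).re : ℝ) : ℂ) = χ i j := fun i =>
    Complex.ext (by simp) (by simp [(hreal i j).2])
  have hMV : M j * V = V * Matrix.diagonal (fun i => (((χ i j).re : ℝ) : ℂ)) := by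
    ext k i
    rw [Matrix.mul_apply, Matrix.mul_diagonal, hχr i, hVapp k i]
    calc ∑ l, M j k l * V l i = (M j *ᵥ (v i : Fin N → ℂ)) k := by
          simp [Matrix.mulVec, dotProduct, hVapp]
    _ = χ i j * (v i : Fin N → ℂ) k := by rw [hχ i j]; rfl
    _ = (v i : Fin N → ℂ) k * χ i j := mul_comm _ _
  calc M j = M j * V * ⅟V := by rw [Matrix.mul_assoc, mul_invOf_self, Matrix.mul_one]
  _ = V * Matrix.diagonal (fun i => (((χ i j).re : ℝ) : ℂ)) * ⅟V := by rw [hMV]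

lemma rpow_flat {x : ℝ} (hx : 0 < x) (a b : ℝ) : (x ^ a) ^ b = x ^ (a * b) :=
  (Real.rpow_mul hx.le a b).symm

lemma inv_as_rpow {x : ℝ} (hx : 0 < x) (a : ℝ) : (x ^ a)⁻¹ = x ^ (-a) :=
  (Real.rpow_neg hx.le a).symm

lemma helper2 {c z : ℝ} (hc : 0 < c) (hz : 0 < z) (α : ℝ) :
    (c⁻¹ * z) ^ α = c ^ (-α) * z ^ α := by
  rw [Real.mul_rpow (inv_nonneg.mpr hc.le) hz.le, ← Real.rpow_neg_one c,
    rpow_flat hc, neg_one_mul]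

lemma helper1 {α t X Y x y : ℝ} (hα : α ≠ 0) (hX : 0 < X) (hY : 0 < Y)
    (hx : 0 < x) (hy : 0 < y) :
    (((X ^ (1/α))⁻¹ * x) ^ t * ((Y ^ (1/α))⁻¹ * y) ^ (1 - t)) ^ α
      = (X ^ (-t) * Y ^ (-(1-t))) * (x ^ (t*α) * y ^ ((1-t)*α)) := by
  rw [inv_as_rpow hX, inv_as_rpow hY,
    Real.mul_rpow (Real.rpow_nonneg hX.le _) hx.le,
    Real.mul_rpow (Real.rpow_nonneg hY.le _) hy.le,
    rpow_flat hX, rpow_flat hY]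
  rw [Real.mul_rpow (by positivity) (by positivity),
    Real.mul_rpow (by positivity) (by positivity),
    Real.mul_rpow (by positivity) (by positivity),
    rpow_flat hX, rpow_flat hY, rpow_flat hx, rpow_flat hy]
  rw [show -(1/α) * t * α = -t by field_simp, show -(1/α) * (1-t) * α = -(1-t) by field_simp]
  ring

lemma helper3 {N1 N2 p q u w : ℝ} (hN1 : 0 < N1) (hN2 : 0 < N2)
    (hp : 0 < p) (hq : 0 < q) (hu : 0 < u) (hw : 0 < w) (α t : ℝ) :
    (N1⁻¹ * (p ^ t * q ^ (1-t))) * (N2⁻¹ * (u ^ t * w ^ (1-t))) ^ (α - 1)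
      = (N1⁻¹ * N2 ^ (-(α-1))) * ((p * u ^ (α-1)) ^ t * (q * w ^ (α-1)) ^ (1-t)) := by
  rw [helper2 hN2 (by positivity), Real.mul_rpow hp.le (Real.rpow_nonneg hu.le _),
    Real.mul_rpow hq.le (Real.rpow_nonneg hw.le _),
    Real.mul_rpow (Real.rpow_nonneg hu.le _) (Real.rpow_nonneg hw.le _),
    rpow_flat hu, rpow_flat hw, rpow_flat hu, rpow_flat hw]
  ring_nf

lemma helper2b {N1 p q : ℝ} (hN1 : 0 < N1) (hp : 0 < p) (hq : 0 < q) (α t : ℝ) :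
    (N1⁻¹ * (p ^ t * q ^ (1-t))) ^ α = N1 ^ (-α) * (p ^ (t*α) * q ^ ((1-t)*α)) := by
  rw [helper2 hN1 (by positivity), Real.mul_rpow (by positivity) (by positivity),
    rpow_flat hp, rpow_flat hq]

lemma log3 {a b c : ℝ} (ha : 0 < a) (hb : 0 < b) (hc : 0 < c) (x y : ℝ) :
    Real.log ((a ^ x * b ^ y) * c) = x * Real.log a + y * Real.log b + Real.log c := by
  rw [Real.log_mul (by positivity) hc.ne', Real.log_mul (by positivity) (by positivity),
    Real.log_rpow ha, Real.log_rpow hb]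

lemma log2 {a c : ℝ} (ha : 0 < a) (hc : 0 < c) (x : ℝ) :
    Real.log (a ^ x * c) = x * Real.log a + Real.log c := by
  rw [Real.log_mul (by positivity) hc.ne', Real.log_rpow ha]
open Finset

lemma holder_sum {ι : Type*} (s : Finset ι) {t : ℝ} (ht0 : 0 ≤ t) (ht1 : t ≤ 1)
    (a b : ι → ℝ) (ha : ∀ i ∈ s, 0 ≤ a i) (hb : ∀ i ∈ s, 0 ≤ b i) :
    ∑ i ∈ s, a i ^ t * b i ^ (1 - t) ≤ (∑ i ∈ s, a i) ^ t * (∑ i ∈ s, b i) ^ (1 - t) := by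
  rcases eq_or_lt_of_le ht0 with h0 | h0
  · simp [← h0]
  rcases eq_or_lt_of_le ht1 with h1 | h1
  · simp [h1]
  have hpq : Real.HolderConjugate (1/t) (1/(1-t)) := by
    rw [Real.holderConjugate_iff]
    constructor
    · rw [lt_div_iff₀ h0]; linarith
    · rw [one_div, one_div, inv_inv, inv_inv]; ring
  have key := Real.inner_le_Lp_mul_Lq_of_nonneg (s := s) hpq
    (f := fun i => a i ^ t) (g := fun i => b i ^ (1 - t))
    (fun i hi => Real.rpow_nonneg (ha i hi) t)
    (fun i hi => Real.rpow_nonneg (hb i hi) (1 - t))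
  have e1 : ∀ i ∈ s, (a i ^ t) ^ (1/t) = a i := fun i hi => by
    rw [← Real.rpow_mul (ha i hi), mul_one_div, div_self (ne_of_gt h0), Real.rpow_one]
  have e2 : ∀ i ∈ s, (b i ^ (1 - t)) ^ (1/(1-t)) = b i := fun i hi => by
    rw [← Real.rpow_mul (hb i hi), mul_one_div, div_self (by linarith), Real.rpow_one]
  rw [Finset.sum_congr rfl e1, Finset.sum_congr rfl e2, one_div_one_div, one_div_one_div] at key
  exact key

lemma key_scalar {N : ℕ} (hN : 0 < N) {α t : ℝ} (hα : 1 < α) (ht0 : 0 ≤ t) (ht1 : t ≤ 1)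
    (p q u w : Fin N → ℝ) (hp : ∀ i, 0 < p i) (hq : ∀ i, 0 < q i)
    (hu : ∀ i, 0 < u i) (hw : ∀ i, 0 < w i) :
    t * (α / (1 - α) * Real.log (∑ i, p i * u i ^ (α - 1))
          - 1 / (1 - α) * Real.log (∑ i, p i ^ α) + Real.log (∑ i, u i ^ α))
    + (1 - t) * (α / (1 - α) * Real.log (∑ i, q i * w i ^ (α - 1))
          - 1 / (1 - α) * Real.log (∑ i, q i ^ α) + Real.log (∑ i, w i ^ α))
    + 1 / (α - 1) * Real.log (∑ i,
        ((((∑ j, p j ^ α) ^ (1/α))⁻¹ * p i) ^ t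
          * (((∑ j, q j ^ α) ^ (1/α))⁻¹ * q i) ^ (1 - t)) ^ α)
    + Real.log (∑ i,
        ((((∑ j, u j ^ α) ^ (1/α))⁻¹ * u i) ^ t
          * (((∑ j, w j ^ α) ^ (1/α))⁻¹ * w i) ^ (1 - t)) ^ α)
    ≤ α / (1 - α) * Real.log (∑ i,
          ((∑ j, p j ^ t * q j ^ (1 - t))⁻¹ * (p i ^ t * q i ^ (1 - t)))
          * ((∑ j, u j ^ t * w j ^ (1 - t))⁻¹ * (u i ^ t * w i ^ (1 - t))) ^ (α - 1))
      - 1 / (1 - α) * Real.log (∑ i,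
          ((∑ j, p j ^ t * q j ^ (1 - t))⁻¹ * (p i ^ t * q i ^ (1 - t))) ^ α)
      + Real.log (∑ i,
          ((∑ j, u j ^ t * w j ^ (1 - t))⁻¹ * (u i ^ t * w i ^ (1 - t))) ^ α) := by
  have hne : Nonempty (Fin N) := ⟨⟨0, hN⟩⟩
  have hα0 : α ≠ 0 := by linarith
  have spos : ∀ f : Fin N → ℝ, (∀ i, 0 < f i) → 0 < ∑ i, f i := fun f hf =>
    Finset.sum_pos (fun i _ => hf i) Finset.univ_nonempty
  set A := ∑ j, p j ^ α with hAdef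
  set B := ∑ j, q j ^ α with hBdef
  set C := ∑ j, u j ^ α with hCdef
  set D := ∑ j, w j ^ α with hDdef
  set N1 := ∑ j, p j ^ t * q j ^ (1 - t) with hN1def
  set N2 := ∑ j, u j ^ t * w j ^ (1 - t) with hN2def
  set Sa := ∑ i, p i * u i ^ (α - 1) with hSadef
  set Sb := ∑ i, q i * w i ^ (α - 1) with hSbdef
  have hA : 0 < A := spos _ fun i => by have := hp i; positivity
  have hB : 0 < B := spos _ fun i => by have := hq i; positivity
  have hC : 0 < C := spos _ fun i => by have := hu i; positivity
  have hD : 0 < D := spos _ fun i => by have := hw i; positivity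
  have hN1 : 0 < N1 := spos _ fun i => by have := hp i; have := hq i; positivity
  have hN2 : 0 < N2 := spos _ fun i => by have := hu i; have := hw i; positivity
  have hSa : 0 < Sa := spos _ fun i => by have := hp i; have := hu i; positivity
  have hSb : 0 < Sb := spos _ fun i => by have := hq i; have := hw i; positivity
  set E1 := ∑ i, p i ^ (t*α) * q i ^ ((1-t)*α) with hE1def
  set E2 := ∑ i, u i ^ (t*α) * w i ^ ((1-t)*α) with hE2def
  set X := ∑ i, (p i * u i ^ (α-1)) ^ t * (q i * w i ^ (α-1)) ^ (1-t) with hXdef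
  have hE1 : 0 < E1 := spos _ fun i => by have := hp i; have := hq i; positivity
  have hE2 : 0 < E2 := spos _ fun i => by have := hu i; have := hw i; positivity
  have hX : 0 < X := spos _ fun i => by
    have := hp i; have := hq i; have := hu i; have := hw i; positivity
  have eqZ1 : (∑ i, (((A ^ (1/α))⁻¹ * p i) ^ t * ((B ^ (1/α))⁻¹ * q i) ^ (1 - t)) ^ α)
      = (A ^ (-t) * B ^ (-(1-t))) * E1 := by
    rw [hE1def, Finset.mul_sum]
    exact Finset.sum_congr rfl fun i _ => helper1 hα0 hA hB (hp i) (hq i)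
  have eqZ2 : (∑ i, (((C ^ (1/α))⁻¹ * u i) ^ t * ((D ^ (1/α))⁻¹ * w i) ^ (1 - t)) ^ α)
      = (C ^ (-t) * D ^ (-(1-t))) * E2 := by
    rw [hE2def, Finset.mul_sum]
    exact Finset.sum_congr rfl fun i _ => helper1 hα0 hC hD (hu i) (hw i)
  have eqm : (∑ i, (N1⁻¹ * (p i ^ t * q i ^ (1 - t))) ^ α) = N1 ^ (-α) * E1 := by
    rw [hE1def, Finset.mul_sum]
    exact Finset.sum_congr rfl fun i _ => helper2b hN1 (hp i) (hq i) α t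
  have eqk : (∑ i, (N2⁻¹ * (u i ^ t * w i ^ (1 - t))) ^ α) = N2 ^ (-α) * E2 := by
    rw [hE2def, Finset.mul_sum]
    exact Finset.sum_congr rfl fun i _ => helper2b hN2 (hu i) (hw i) α t
  have eqX : (∑ i, (N1⁻¹ * (p i ^ t * q i ^ (1 - t)))
        * ((N2⁻¹ * (u i ^ t * w i ^ (1 - t)))) ^ (α - 1))
      = (N1 ^ (-(1:ℝ)) * N2 ^ (-(α-1))) * X := by
    rw [hXdef, Finset.mul_sum, Real.rpow_neg_one]
    exact Finset.sum_congr rfl fun i _ =>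
      helper3 hN1 hN2 (hp i) (hq i) (hu i) (hw i) α t
  rw [eqZ1, eqZ2, eqm, eqk, eqX]
  rw [log3 hA hB hE1 (-t) (-(1-t)), log3 hC hD hE2 (-t) (-(1-t)),
    log2 hN1 hE1 (-α), log2 hN2 hE2 (-α), log3 hN1 hN2 hX (-1) (-(α-1))]
  -- Hölder
  have hhold : X ≤ Sa ^ t * Sb ^ (1 - t) := by
    rw [hXdef, hSadef, hSbdef]
    exact holder_sum Finset.univ ht0 ht1 _ _
      (fun i _ => by have := hp i; have := hu i; positivity)
      (fun i _ => by have := hq i; have := hw i; positivity)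
  have hlogX : Real.log X ≤ t * Real.log Sa + (1-t) * Real.log Sb := by
    calc Real.log X ≤ Real.log (Sa ^ t * Sb ^ (1-t)) := Real.log_le_log hX hhold
    _ = t * Real.log Sa + (1-t) * Real.log Sb := by
        rw [Real.log_mul (by positivity) (by positivity), Real.log_rpow hSa, Real.log_rpow hSb]
  have h1α : (1:ℝ) - α ≠ 0 := by linarith
  have hα1 : α - 1 ≠ 0 := by linarith
  set lA := Real.log A
  set lB := Real.log B
  set lC := Real.log C
  set lD := Real.log D
  set lN1 := Real.log N1
  set lN2 := Real.log N2
  set lSa := Real.log Sa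
  set lSb := Real.log Sb
  set lE1 := Real.log E1
  set lE2 := Real.log E2
  set lX := Real.log X
  have hkey : α / (1 - α) * (-1 * lN1 + -(α-1) * lN2 + lX)
        - 1 / (1 - α) * (-α * lN1 + lE1) + (-α * lN2 + lE2)
      = (t * (α / (1 - α) * lSa - 1 / (1 - α) * lA + lC)
        + (1 - t) * (α / (1 - α) * lSb - 1 / (1 - α) * lB + lD)
        + 1 / (α - 1) * (-t * lA + -(1-t) * lB + lE1)
        + (-t * lC + -(1-t) * lD + lE2))
        + (α / (α - 1)) * ((t * lSa + (1-t) * lSb) - lX) := by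
    field_simp
    ring
  rw [hkey]
  have hnn : 0 ≤ (α / (α - 1)) * ((t * lSa + (1-t) * lSb) - lX) := by
    apply mul_nonneg
    · apply div_nonneg <;> linarith
    · linarith [hlogX]
  linarith

/-- Generalized (nonlinear) joint convexity of the quantum relative α-entropy for `α > 1`:
`S_α(M_{ρ,σ}^t ‖ M_{τ,ω}^t) ≥ t S_α(ρ‖τ) + (1−t) S_α(σ‖ω) + (1/(α−1)) log Z_{ρ,σ}^t + log Z_{τ,ω}^t`. -/
theorem Salpha_generalized_convexity_gt_one {n : ℕ} (α t : ℝ)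
    (hα : 1 < α) (ht0 : 0 ≤ t) (ht1 : t ≤ 1)
    (ρ σ τ ω : Matrix (Fin n) (Fin n) ℂ)
    (hρ : ρ.PosDef) (hρ1 : ρ.trace = 1)
    (hσ : σ.PosDef) (hσ1 : σ.trace = 1)
    (hτ : τ.PosDef) (hτ1 : τ.trace = 1)
    (hω : ω.PosDef) (hω1 : ω.trace = 1)
    (hρσ : ρ * σ = σ * ρ) (hρτ : ρ * τ = τ * ρ) (hρω : ρ * ω = ω * ρ)
    (hστ : σ * τ = τ * σ) (hσω : σ * ω = ω * σ) (hτω : τ * ω = ω * τ) :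
    t * Salpha α ρ τ + (1 - t) * Salpha α σ ω
        + 1 / (α - 1) * Real.log (Zfactor α t ρ σ) + Real.log (Zfactor α t τ ω)
      ≤ Salpha α (genMix t ρ σ) (genMix t τ ω) := by
  have hn : 0 < n := by
    rcases Nat.eq_zero_or_pos n with h | h
    · subst h
      simp [Matrix.trace, Finset.univ_eq_empty] at hρ1
    · exact h
  obtain ⟨V, W, d, hVW, hWV, hdpos, hrep⟩ := simul_diag ![ρ, σ, τ, ω]
    (by intro j; fin_cases j <;> assumption)
    (by intro j k; fin_cases j <;> fin_cases k <;>
      first | rfl | assumption | (symm; assumption))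
  set p := d 0 with hp'
  set q := d 1 with hq'
  set u := d 2 with hu'
  set w := d 3 with hw'
  have hρr : ρ = V * Matrix.diagonal (fun i => ((p i : ℝ) : ℂ)) * W := by simpa using hrep 0
  have hσr : σ = V * Matrix.diagonal (fun i => ((q i : ℝ) : ℂ)) * W := by simpa using hrep 1
  have hτr : τ = V * Matrix.diagonal (fun i => ((u i : ℝ) : ℂ)) * W := by simpa using hrep 2
  have hωr : ω = V * Matrix.diagonal (fun i => ((w i : ℝ) : ℂ)) * W := by simpa using hrep 3
  -- powers
  have hmρt := mRpow_eq_conj hρ.1 hVW hWV hρr t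
  have hmσ1t := mRpow_eq_conj hσ.1 hVW hWV hσr (1 - t)
  have hmτt := mRpow_eq_conj hτ.1 hVW hWV hτr t
  have hmω1t := mRpow_eq_conj hω.1 hVW hWV hωr (1 - t)
  have hmρα := mRpow_eq_conj hρ.1 hVW hWV hρr α
  have hmσα := mRpow_eq_conj hσ.1 hVW hWV hσr α
  have hmτα := mRpow_eq_conj hτ.1 hVW hWV hτr α
  have hmωα := mRpow_eq_conj hω.1 hVW hWV hωr α
  have hmτα1 := mRpow_eq_conj hτ.1 hVW hWV hτr (α - 1)
  have hmωα1 := mRpow_eq_conj hω.1 hVW hWV hωr (α - 1)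
  -- Salpha pieces for (ρ,τ) and (σ,ω)
  have T1 : (ρ * mRpow τ (α - 1)).trace.re = ∑ i, p i * u i ^ (α - 1) := by
    rw [hρr, hmτα1, VDW_mul_real hWV, VDW_trace_re hWV]
  have T2 : (mRpow ρ α).trace.re = ∑ i, p i ^ α := by rw [hmρα, VDW_trace_re hWV]
  have T3 : (mRpow τ α).trace.re = ∑ i, u i ^ α := by rw [hmτα, VDW_trace_re hWV]
  have T4 : (σ * mRpow ω (α - 1)).trace.re = ∑ i, q i * w i ^ (α - 1) := by
    rw [hσr, hmωα1, VDW_mul_real hWV, VDW_trace_re hWV]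
  have T5 : (mRpow σ α).trace.re = ∑ i, q i ^ α := by rw [hmσα, VDW_trace_re hWV]
  have T6 : (mRpow ω α).trace.re = ∑ i, w i ^ α := by rw [hmωα, VDW_trace_re hWV]
  -- genMix ρ σ
  have htrρσ : (mRpow ρ t * mRpow σ (1 - t)).trace
      = ((∑ j, p j ^ t * q j ^ (1 - t) : ℝ) : ℂ) := by
    rw [hmρt, hmσ1t, VDW_mul_real hWV, VDW_trace_c hWV]
  have hgm1 : genMix t ρ σ = V * Matrix.diagonal
      (fun i => (((∑ j, p j ^ t * q j ^ (1 - t))⁻¹ * (p i ^ t * q i ^ (1 - t)) : ℝ) : ℂ)) * W := by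
    unfold genMix
    rw [htrρσ, hmρt, hmσ1t, VDW_mul_real hWV, ← Complex.ofReal_inv, VDW_smul_real]
  have hgm1H : (genMix t ρ σ).IsHermitian := by
    unfold genMix
    rw [htrρσ, ← Complex.ofReal_inv]
    exact herm_smul (herm_mul (mRpow_isHermitian _ _) (mRpow_isHermitian _ _)
      (VDW_comm hWV hmρt hmσ1t)) _
  -- genMix τ ω
  have htrτω : (mRpow τ t * mRpow ω (1 - t)).trace
      = ((∑ j, u j ^ t * w j ^ (1 - t) : ℝ) : ℂ) := by
    rw [hmτt, hmω1t, VDW_mul_real hWV, VDW_trace_c hWV]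
  have hgm2 : genMix t τ ω = V * Matrix.diagonal
      (fun i => (((∑ j, u j ^ t * w j ^ (1 - t))⁻¹ * (u i ^ t * w i ^ (1 - t)) : ℝ) : ℂ)) * W := by
    unfold genMix
    rw [htrτω, hmτt, hmω1t, VDW_mul_real hWV, ← Complex.ofReal_inv, VDW_smul_real]
  have hgm2H : (genMix t τ ω).IsHermitian := by
    unfold genMix
    rw [htrτω, ← Complex.ofReal_inv]
    exact herm_smul (herm_mul (mRpow_isHermitian _ _) (mRpow_isHermitian _ _)
      (VDW_comm hWV hmτt hmω1t)) _
  have hgm1α := mRpow_eq_conj hgm1H hVW hWV hgm1 α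
  have hgm2α := mRpow_eq_conj hgm2H hVW hWV hgm2 α
  have hgm2α1 := mRpow_eq_conj hgm2H hVW hWV hgm2 (α - 1)
  have T7 : (genMix t ρ σ * mRpow (genMix t τ ω) (α - 1)).trace.re
      = ∑ i, ((∑ j, p j ^ t * q j ^ (1 - t))⁻¹ * (p i ^ t * q i ^ (1 - t)))
          * ((∑ j, u j ^ t * w j ^ (1 - t))⁻¹ * (u i ^ t * w i ^ (1 - t))) ^ (α - 1) := by
    rw [hgm1, hgm2α1, VDW_mul_real hWV, VDW_trace_re hWV]
  have T8 : (mRpow (genMix t ρ σ) α).trace.re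
      = ∑ i, ((∑ j, p j ^ t * q j ^ (1 - t))⁻¹ * (p i ^ t * q i ^ (1 - t))) ^ α := by
    rw [hgm1α, VDW_trace_re hWV]
  have T9 : (mRpow (genMix t τ ω) α).trace.re
      = ∑ i, ((∑ j, u j ^ t * w j ^ (1 - t))⁻¹ * (u i ^ t * w i ^ (1 - t))) ^ α := by
    rw [hgm2α, VDW_trace_re hWV]
  -- Zfactor ρ σ
  have hschρ : Complex.ofReal (schattenNorm α ρ) = (((∑ j, p j ^ α) ^ (1/α) : ℝ) : ℂ) := by
    unfold schattenNorm
    rw [hmρα, VDW_trace_re hWV]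
  have hschσ : Complex.ofReal (schattenNorm α σ) = (((∑ j, q j ^ α) ^ (1/α) : ℝ) : ℂ) := by
    unfold schattenNorm
    rw [hmσα, VDW_trace_re hWV]
  have hschτ : Complex.ofReal (schattenNorm α τ) = (((∑ j, u j ^ α) ^ (1/α) : ℝ) : ℂ) := by
    unfold schattenNorm
    rw [hmτα, VDW_trace_re hWV]
  have hschω : Complex.ofReal (schattenNorm α ω) = (((∑ j, w j ^ α) ^ (1/α) : ℝ) : ℂ) := by
    unfold schattenNorm
    rw [hmωα, VDW_trace_re hWV]
  have hscρ : (Complex.ofReal (schattenNorm α ρ))⁻¹ • ρ = V * Matrix.diagonal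
      (fun i => (((((∑ j, p j ^ α) ^ (1/α))⁻¹ * p i : ℝ)) : ℂ)) * W := by
    rw [hschρ, ← Complex.ofReal_inv, hρr, VDW_smul_real]
  have hscσ : (Complex.ofReal (schattenNorm α σ))⁻¹ • σ = V * Matrix.diagonal
      (fun i => (((((∑ j, q j ^ α) ^ (1/α))⁻¹ * q i : ℝ)) : ℂ)) * W := by
    rw [hschσ, ← Complex.ofReal_inv, hσr, VDW_smul_real]
  have hscτ : (Complex.ofReal (schattenNorm α τ))⁻¹ • τ = V * Matrix.diagonal
      (fun i => (((((∑ j, u j ^ α) ^ (1/α))⁻¹ * u i : ℝ)) : ℂ)) * W := by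
    rw [hschτ, ← Complex.ofReal_inv, hτr, VDW_smul_real]
  have hscω : (Complex.ofReal (schattenNorm α ω))⁻¹ • ω = V * Matrix.diagonal
      (fun i => (((((∑ j, w j ^ α) ^ (1/α))⁻¹ * w i : ℝ)) : ℂ)) * W := by
    rw [hschω, ← Complex.ofReal_inv, hωr, VDW_smul_real]
  have hscρH : ((Complex.ofReal (schattenNorm α ρ))⁻¹ • ρ).IsHermitian := by
    rw [hschρ, ← Complex.ofReal_inv]; exact herm_smul hρ.1 _
  have hscσH : ((Complex.ofReal (schattenNorm α σ))⁻¹ • σ).IsHermitian := by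
    rw [hschσ, ← Complex.ofReal_inv]; exact herm_smul hσ.1 _
  have hscτH : ((Complex.ofReal (schattenNorm α τ))⁻¹ • τ).IsHermitian := by
    rw [hschτ, ← Complex.ofReal_inv]; exact herm_smul hτ.1 _
  have hscωH : ((Complex.ofReal (schattenNorm α ω))⁻¹ • ω).IsHermitian := by
    rw [hschω, ← Complex.ofReal_inv]; exact herm_smul hω.1 _
  have hmscρ := mRpow_eq_conj hscρH hVW hWV hscρ t
  have hmscσ := mRpow_eq_conj hscσH hVW hWV hscσ (1 - t)
  have hmscτ := mRpow_eq_conj hscτH hVW hWV hscτ t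
  have hmscω := mRpow_eq_conj hscωH hVW hWV hscω (1 - t)
  have hprod1 : mRpow ((Complex.ofReal (schattenNorm α ρ))⁻¹ • ρ) t
        * mRpow ((Complex.ofReal (schattenNorm α σ))⁻¹ • σ) (1 - t)
      = V * Matrix.diagonal (fun i =>
          ((((((∑ j, p j ^ α) ^ (1/α))⁻¹ * p i) ^ t
            * ((((∑ j, q j ^ α) ^ (1/α))⁻¹ * q i)) ^ (1 - t) : ℝ)) : ℂ)) * W := by
    rw [hmscρ, hmscσ, VDW_mul_real hWV]
  have hprod2 : mRpow ((Complex.ofReal (schattenNorm α τ))⁻¹ • τ) t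
        * mRpow ((Complex.ofReal (schattenNorm α ω))⁻¹ • ω) (1 - t)
      = V * Matrix.diagonal (fun i =>
          ((((((∑ j, u j ^ α) ^ (1/α))⁻¹ * u i) ^ t
            * ((((∑ j, w j ^ α) ^ (1/α))⁻¹ * w i)) ^ (1 - t) : ℝ)) : ℂ)) * W := by
    rw [hmscτ, hmscω, VDW_mul_real hWV]
  have hprod1H := herm_mul (mRpow_isHermitian _ t) (mRpow_isHermitian _ (1 - t))
      (VDW_comm hWV hmscρ hmscσ)
  have hprod2H := herm_mul (mRpow_isHermitian _ t) (mRpow_isHermitian _ (1 - t))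
      (VDW_comm hWV hmscτ hmscω)
  have T10 : Zfactor α t ρ σ = ∑ i,
      ((((∑ j, p j ^ α) ^ (1/α))⁻¹ * p i) ^ t
        * (((∑ j, q j ^ α) ^ (1/α))⁻¹ * q i) ^ (1 - t)) ^ α := by
    unfold Zfactor
    rw [mRpow_eq_conj hprod1H hVW hWV hprod1 α, VDW_trace_re hWV]
  have T11 : Zfactor α t τ ω = ∑ i,
      ((((∑ j, u j ^ α) ^ (1/α))⁻¹ * u i) ^ t
        * (((∑ j, w j ^ α) ^ (1/α))⁻¹ * w i) ^ (1 - t)) ^ α := by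
    unfold Zfactor
    rw [mRpow_eq_conj hprod2H hVW hWV hprod2 α, VDW_trace_re hWV]
  unfold Salpha
  rw [T1, T2, T3, T4, T5, T6, T7, T8, T9, T10, T11]
  exact key_scalar hn hα ht0 ht1 p q u w (hdpos 0) (hdpos 1) (hdpos 2) (hdpos 3)
end

section
/- Let ρ, σ, τ, ω be pairwise commuting positive definite density matrices on ℂ^n, let t ∈ [0,1], and let α > 1. With M_{ρ,σ}^t = ρ^t σ^{1−t} / Tr(ρ^t σ^{1−t}), the Petz–Rényi α-relative entropy satisfies the generalized convexity inequality D̂_α(M_{ρ,σ}^t ‖ M_{τ,ω}^t) ≤ t·D̂_α(ρ‖τ) + (1−t)·D̂_α(σ‖ω) + (α/(1−α))·log Tr(ρ^t σ^{1−t}) + log Tr(τ^t ω^{1−t}). For α ∈ (0,1) the reverse inequality holds. -/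
open Matrix ComplexOrder

/-- The Petz–Rényi α-relative entropy `D̂_α(ρ‖σ) = (1/(α−1))·log Tr(ρ^α σ^{1−α})`. -/
noncomputable def petzRenyi {m : Type*} [Fintype m] [DecidableEq m]
    (α : ℝ) (ρ σ : Matrix m m ℂ) : ℝ :=
  1 / (α - 1) * Real.log ((mRpow ρ α * mRpow σ (1 - α)).trace.re)

section AuxiliaryLemmas

variable {n : ℕ}

private lemma cnj_isHermitian (U : Matrix.unitaryGroup (Fin n) ℂ) (d : Fin n → ℝ) :
    ((U : Matrix (Fin n) (Fin n) ℂ) * diagonal (fun i => (d i : ℂ)) *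
      star (U : Matrix (Fin n) (Fin n) ℂ)).IsHermitian := by
  have hd : (Matrix.diagonal (fun i => (d i : ℂ))).IsHermitian :=
    isHermitian_diagonal_of_self_adjoint _ (funext fun i => Complex.conj_ofReal (d i))
  unfold Matrix.IsHermitian
  rw [conjTranspose_mul, conjTranspose_mul, hd.eq]
  simp [mul_assoc, star_eq_conjTranspose]

private lemma transfer (U V : Matrix.unitaryGroup (Fin n) ℂ) (d e : Fin n → ℝ) (f : ℝ → ℝ)
    (h : (U : Matrix (Fin n) (Fin n) ℂ) * diagonal (fun i => (d i : ℂ)) *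
        star (U : Matrix (Fin n) (Fin n) ℂ)
      = (V : Matrix (Fin n) (Fin n) ℂ) * diagonal (fun i => (e i : ℂ)) *
        star (V : Matrix (Fin n) (Fin n) ℂ)) :
    (U : Matrix (Fin n) (Fin n) ℂ) * diagonal (fun i => (f (d i) : ℂ)) *
        star (U : Matrix (Fin n) (Fin n) ℂ)
      = (V : Matrix (Fin n) (Fin n) ℂ) * diagonal (fun i => (f (e i) : ℂ)) *
        star (V : Matrix (Fin n) (Fin n) ℂ) := by
  set U' : Matrix (Fin n) (Fin n) ℂ := (U : Matrix (Fin n) (Fin n) ℂ)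
  set V' : Matrix (Fin n) (Fin n) ℂ := (V : Matrix (Fin n) (Fin n) ℂ)
  have hU1 : star U' * U' = 1 := Unitary.coe_star_mul_self U
  have hU2 : U' * star U' = 1 := Unitary.coe_mul_star_self U
  have hV1 : star V' * V' = 1 := Unitary.coe_star_mul_self V
  have hV2 : V' * star V' = 1 := Unitary.coe_mul_star_self V
  set W : Matrix (Fin n) (Fin n) ℂ := star U' * V' with hW
  have key : diagonal (fun i => (d i : ℂ)) * W = W * diagonal (fun i => (e i : ℂ)) := by
    calc diagonal (fun i => (d i : ℂ)) * (star U' * V')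
        = star U' * (U' * diagonal (fun i => (d i : ℂ)) * star U') * V' := by
          simp only [← mul_assoc, hU1, one_mul]
      _ = star U' * (V' * diagonal (fun i => (e i : ℂ)) * star V') * V' := by rw [h]
      _ = star U' * V' * diagonal (fun i => (e i : ℂ)) := by
          simp only [mul_assoc, hV1, mul_one]
  have key2 : ∀ i j, (d i : ℂ) * W i j = W i j * (e j : ℂ) := by
    intro i j
    have := congrFun (congrFun key i) j
    simpa [Matrix.diagonal_mul, Matrix.mul_diagonal] using this
  have key3 : diagonal (fun i => (f (d i) : ℂ)) * W = W * diagonal (fun i => (f (e i) : ℂ)) := by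
    ext i j
    simp only [Matrix.diagonal_mul, Matrix.mul_diagonal]
    by_cases h0 : W i j = 0
    · simp [h0]
    · have hde : (d i : ℂ) = (e j : ℂ) := by
        have h2 := key2 i j
        rw [mul_comm (W i j) _] at h2
        exact mul_right_cancel₀ h0 h2
      have : d i = e j := Complex.ofReal_inj.mp hde
      rw [this, mul_comm]
  calc U' * diagonal (fun i => (f (d i) : ℂ)) * star U'
      = U' * (diagonal (fun i => (f (d i) : ℂ)) * W) * star V' := by
        simp only [hW, ← mul_assoc]
        rw [mul_assoc _ V' (star V'), hV2, mul_one]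
    _ = U' * (W * diagonal (fun i => (f (e i) : ℂ))) * star V' := by rw [key3]
    _ = V' * diagonal (fun i => (f (e i) : ℂ)) * star V' := by
        simp only [hW, ← mul_assoc, hU2, one_mul]

private lemma mRpow_cnj (U : Matrix.unitaryGroup (Fin n) ℂ) (d : Fin n → ℝ) (r : ℝ) :
    mRpow ((U : Matrix (Fin n) (Fin n) ℂ) * diagonal (fun i => (d i : ℂ)) *
        star (U : Matrix (Fin n) (Fin n) ℂ)) r
      = (U : Matrix (Fin n) (Fin n) ℂ) * diagonal (fun i => ((d i ^ r : ℝ) : ℂ)) *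
        star (U : Matrix (Fin n) (Fin n) ℂ) := by
  have hA := cnj_isHermitian U d
  rw [mRpow, dif_pos hA]
  refine transfer hA.eigenvectorUnitary U hA.eigenvalues d (fun x => x ^ r) ?_
  have := hA.spectral_theorem
  exact this.symm

private lemma cnj_mul (U : Matrix.unitaryGroup (Fin n) ℂ) (x y : Fin n → ℂ) :
    ((U : Matrix (Fin n) (Fin n) ℂ) * diagonal x * star (U : Matrix (Fin n) (Fin n) ℂ)) *
      ((U : Matrix (Fin n) (Fin n) ℂ) * diagonal y * star (U : Matrix (Fin n) (Fin n) ℂ))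
    = (U : Matrix (Fin n) (Fin n) ℂ) * diagonal (fun i => x i * y i) *
        star (U : Matrix (Fin n) (Fin n) ℂ) := by
  have hU1 : star (U : Matrix (Fin n) (Fin n) ℂ) * U = 1 := Unitary.coe_star_mul_self U
  calc ((U : Matrix (Fin n) (Fin n) ℂ) * diagonal x * star (U : Matrix (Fin n) (Fin n) ℂ)) *
      ((U : Matrix (Fin n) (Fin n) ℂ) * diagonal y * star (U : Matrix (Fin n) (Fin n) ℂ))
      = (U : Matrix (Fin n) (Fin n) ℂ) * (diagonal x * diagonal y) *
        star (U : Matrix (Fin n) (Fin n) ℂ) := by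
        simp only [mul_assoc]
        rw [← mul_assoc (star (U : Matrix (Fin n) (Fin n) ℂ)) _ _, hU1, one_mul]
    _ = _ := by rw [diagonal_mul_diagonal]

private lemma cnj_trace (U : Matrix.unitaryGroup (Fin n) ℂ) (x : Fin n → ℂ) :
    ((U : Matrix (Fin n) (Fin n) ℂ) * diagonal x * star (U : Matrix (Fin n) (Fin n) ℂ)).trace
      = ∑ i, x i := by
  rw [Matrix.trace_mul_cycle, Unitary.coe_star_mul_self U, one_mul, trace_diagonal]

private lemma cnj_smul (U : Matrix.unitaryGroup (Fin n) ℂ) (x : Fin n → ℂ) (c : ℂ) :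
    c • ((U : Matrix (Fin n) (Fin n) ℂ) * diagonal x * star (U : Matrix (Fin n) (Fin n) ℂ))
      = (U : Matrix (Fin n) (Fin n) ℂ) * diagonal (fun i => c * x i) *
        star (U : Matrix (Fin n) (Fin n) ℂ) := by
  have h1 : (fun i => c * x i) = c • x := rfl
  rw [h1, Matrix.diagonal_smul, Matrix.mul_smul, smul_mul_assoc]

private lemma cnj_posDef_entries (U : Matrix.unitaryGroup (Fin n) ℂ) (d : Fin n → ℝ)
    (h : ((U : Matrix (Fin n) (Fin n) ℂ) * diagonal (fun i => (d i : ℂ)) *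
        star (U : Matrix (Fin n) (Fin n) ℂ)).PosDef) (i : Fin n) : 0 < d i := by
  set U' : Matrix (Fin n) (Fin n) ℂ := (U : Matrix (Fin n) (Fin n) ℂ) with hU'
  have hU1 : star U' * U' = 1 := Unitary.coe_star_mul_self U
  set x : Fin n → ℂ := U' *ᵥ Pi.single i 1 with hx
  have hx0 : x ≠ 0 := by
    intro h0
    have h1 : Pi.single i 1 = (0 : Fin n → ℂ) := by
      rw [← Matrix.one_mulVec (Pi.single i 1), ← hU1, ← Matrix.mulVec_mulVec, ← hx, h0,
        Matrix.mulVec_zero]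
    simpa using congrFun h1 i
  have hmv : (U' * diagonal (fun j => (d j : ℂ)) * star U') *ᵥ x = ((d i : ℂ)) • x := by
    rw [hx, Matrix.mulVec_mulVec]
    have : U' * diagonal (fun j => (d j : ℂ)) * star U' * U'
        = U' * diagonal (fun j => (d j : ℂ)) := by
      rw [mul_assoc, hU1, mul_one]
    rw [this, ← Matrix.mulVec_mulVec, Matrix.diagonal_mulVec_single]
    have h2 : Pi.single i ((d i : ℂ) * 1) = (d i : ℂ) • (Pi.single i 1 : Fin n → ℂ) := by
      ext j
      by_cases hj : j = i
      · subst hj; simp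
      · simp [Pi.single_eq_of_ne hj]
    rw [h2, Matrix.mulVec_smul]
  have hs : dotProduct (star x) x = 1 := by
    rw [hx, Matrix.star_mulVec, Matrix.dotProduct_mulVec, Matrix.vecMul_vecMul,
      ← Matrix.star_eq_conjTranspose, hU1, Matrix.vecMul_one]
    simp
  have hpos := h.dotProduct_mulVec_pos hx0
  rw [hmv, dotProduct_smul, hs, smul_eq_mul, mul_one] at hpos
  exact_mod_cast hpos

set_option maxHeartbeats 1000000 in
private lemma joint_diag (A : Fin 4 → Matrix (Fin n) (Fin n) ℂ)
    (hH : ∀ i, (A i).IsHermitian) (hC : ∀ i j, A i * A j = A j * A i) :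
    ∃ (U : Matrix.unitaryGroup (Fin n) ℂ) (d : Fin 4 → Fin n → ℝ),
      ∀ i, A i = (U : Matrix (Fin n) (Fin n) ℂ) * diagonal (fun k => (d i k : ℂ)) *
        star (U : Matrix (Fin n) (Fin n) ℂ) := by
  classical
  set T : Fin 4 → Module.End ℂ (EuclideanSpace ℂ (Fin n)) :=
    fun i => Matrix.toEuclideanLin (A i) with hTdef
  have hTsym : ∀ i, (T i).IsSymmetric := fun i => (Matrix.isHermitian_iff_isSymmetric).1 (hH i)
  have hTcomm : Pairwise (Function.onFun Commute T) := by
    intro i j _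
    show T i * T j = T j * T i
    have hmul : ∀ B C : Matrix (Fin n) (Fin n) ℂ,
        Matrix.toEuclideanLin (B * C)
          = (Matrix.toEuclideanLin B) * (Matrix.toEuclideanLin C) := by
      intro B C
      simp only [Matrix.toEuclideanLin_eq_toLin]
      rw [Matrix.toLin_mul _ (PiLp.basisFun 2 ℂ (Fin n)) _]
      rfl
    simp only [hTdef, ← hmul, hC i j]
  have hOF := LinearMap.IsSymmetric.orthogonalFamily_iInf_eigenspaces hTsym
  have htop : ⨆ χ : Fin 4 → ℂ, ⨅ j, Module.End.eigenspace (T j) (χ j) = ⊤ :=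
    LinearMap.IsSymmetric.iSup_iInf_eq_top_of_commute hTsym hTcomm
  have hindep : iSupIndep (fun χ : Fin 4 → ℂ => ⨅ j, Module.End.eigenspace (T j) (χ j)) :=
    hOF.independent
  haveI : Fintype {χ : Fin 4 → ℂ // (⨅ j, Module.End.eigenspace (T j) (χ j)) ≠ ⊥} :=
    hindep.fintypeNeBotOfFiniteDimensional
  have hOF' := hOF.comp
    (Subtype.val_injective : Function.Injective
      ((↑) : {χ : Fin 4 → ℂ // (⨅ j, Module.End.eigenspace (T j) (χ j)) ≠ ⊥} → (Fin 4 → ℂ)))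
  have hint : DirectSum.IsInternal
      (fun χ' : {χ : Fin 4 → ℂ // (⨅ j, Module.End.eigenspace (T j) (χ j)) ≠ ⊥} =>
        ⨅ j, Module.End.eigenspace (T j) (χ'.1 j)) := by
    apply hOF'.isInternal_iff.mpr
    have hsup := iSup_ne_bot_subtype (fun χ : Fin 4 → ℂ => ⨅ j, Module.End.eigenspace (T j) (χ j))
    rw [hsup, htop, Submodule.top_orthogonal_eq_bot]
  have hn : Module.finrank ℂ (EuclideanSpace ℂ (Fin n)) = n := finrank_euclideanSpace_fin
  set b : OrthonormalBasis (Fin n) ℂ (EuclideanSpace ℂ (Fin n)) :=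
    hint.subordinateOrthonormalBasis hn hOF' with hbdef
  set χ : Fin n → (Fin 4 → ℂ) :=
    fun a => (hint.subordinateOrthonormalBasisIndex hn a hOF').1 with hχdef
  have hbe : ∀ a j, T j (b a) = χ a j • b a := by
    intro a j
    have hmem := hint.subordinateOrthonormalBasis_subordinate hn a hOF'
    exact Module.End.mem_eigenspace_iff.mp ((Submodule.mem_iInf _).mp hmem j)
  have hb0 : ∀ a, (b a : EuclideanSpace ℂ (Fin n)) ≠ 0 := by
    intro a
    simpa using b.toBasis.ne_zero a
  have hreal : ∀ a j, ((χ a j).re : ℂ) = χ a j := by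
    intro a j
    refine Complex.conj_eq_iff_re.mp ?_
    exact (hTsym j).conj_eigenvalue_eq_self
      (Module.End.hasEigenvalue_of_hasEigenvector
        ⟨Module.End.mem_eigenspace_iff.mpr (hbe a j), hb0 a⟩)
  refine ⟨⟨(EuclideanSpace.basisFun (Fin n) ℂ).toBasis.toMatrix b.toBasis,
      (EuclideanSpace.basisFun (Fin n) ℂ).toMatrix_orthonormalBasis_mem_unitary b⟩,
    fun j a => (χ a j).re, ?_⟩
  intro i
  set U : Matrix.unitaryGroup (Fin n) ℂ :=
    ⟨(EuclideanSpace.basisFun (Fin n) ℂ).toBasis.toMatrix b.toBasis,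
      (EuclideanSpace.basisFun (Fin n) ℂ).toMatrix_orthonormalBasis_mem_unitary b⟩ with hUdef
  have hUapply : ∀ k a, (U : Matrix (Fin n) (Fin n) ℂ) k a = b a k := fun k a => rfl
  have hUmulVec : ∀ a, (U : Matrix (Fin n) (Fin n) ℂ) *ᵥ Pi.single a 1 = ⇑(b a) := by
    intro a
    funext k
    simp only [Matrix.mulVec_single, mul_one]
    simpa using hUapply k a
  have hstar : ∀ a, star (U : Matrix (Fin n) (Fin n) ℂ) *ᵥ ⇑(b a) = Pi.single a 1 := by
    intro a
    rw [← hUmulVec, Matrix.mulVec_mulVec, Unitary.coe_star_mul_self, Matrix.one_mulVec]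
  have hAmulVec : ∀ a, A i *ᵥ ⇑(b a) = ((χ a i).re : ℂ) • ⇑(b a) := by
    intro a
    have h1 : T i (b a) = (((χ a i).re : ℂ)) • b a := by rw [hreal a i]; exact hbe a i
    have h2 := congrArg WithLp.ofLp h1
    simpa only [hTdef, Matrix.ofLp_toEuclideanLin_apply, WithLp.ofLp_smul] using h2
  have key : star (U : Matrix (Fin n) (Fin n) ℂ) * A i * (U : Matrix (Fin n) (Fin n) ℂ)
      = diagonal (fun a => (((χ a i).re : ℝ) : ℂ)) := by
    have hcol : ∀ a, (star (U : Matrix (Fin n) (Fin n) ℂ) * A i *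
        (U : Matrix (Fin n) (Fin n) ℂ)) *ᵥ Pi.single a 1
        = diagonal (fun a => (((χ a i).re : ℝ) : ℂ)) *ᵥ Pi.single a 1 := by
      intro a
      rw [← Matrix.mulVec_mulVec, ← Matrix.mulVec_mulVec, hUmulVec a, hAmulVec a,
        Matrix.mulVec_smul, hstar a, Matrix.diagonal_mulVec_single]
      funext k
      by_cases hk : k = a
      · subst hk; simp
      · simp [Pi.single_eq_of_ne hk]
    ext k a
    have h3 := congrFun (hcol a) k
    simp [Matrix.mulVec_single] at h3
    rw [h3]
    by_cases hk : k = a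
    · subst hk; simp
    · simp [Pi.single_eq_of_ne hk, Matrix.diagonal_apply_ne _ hk]
  have hU2 : (U : Matrix (Fin n) (Fin n) ℂ) * star (U : Matrix (Fin n) (Fin n) ℂ) = 1 :=
    Unitary.coe_mul_star_self U
  calc A i = (U : Matrix (Fin n) (Fin n) ℂ) *
        (star (U : Matrix (Fin n) (Fin n) ℂ) * A i * (U : Matrix (Fin n) (Fin n) ℂ)) *
        star (U : Matrix (Fin n) (Fin n) ℂ) := by
        rw [mul_assoc (star _) (A i) _, ← mul_assoc _ (star _) _, hU2, one_mul,
          mul_assoc (A i) _ _, hU2, mul_one]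
    _ = _ := by rw [key]

private lemma trace_re_mRpow_mul (U : Matrix.unitaryGroup (Fin n) ℂ) (x y : Fin n → ℝ)
    (r s : ℝ) :
    ((mRpow ((U : Matrix (Fin n) (Fin n) ℂ) * diagonal (fun i => (x i : ℂ)) *
        star (U : Matrix (Fin n) (Fin n) ℂ)) r) *
      (mRpow ((U : Matrix (Fin n) (Fin n) ℂ) * diagonal (fun i => (y i : ℂ)) *
        star (U : Matrix (Fin n) (Fin n) ℂ)) s)).trace.re
      = ∑ i, x i ^ r * y i ^ s := by
  rw [mRpow_cnj, mRpow_cnj, cnj_mul, cnj_trace]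
  simp [← Complex.ofReal_mul, ← Complex.ofReal_sum]

private lemma genMix_cnj (U : Matrix.unitaryGroup (Fin n) ℂ) (x y : Fin n → ℝ) (t : ℝ) :
    genMix t ((U : Matrix (Fin n) (Fin n) ℂ) * diagonal (fun i => (x i : ℂ)) *
        star (U : Matrix (Fin n) (Fin n) ℂ))
      ((U : Matrix (Fin n) (Fin n) ℂ) * diagonal (fun i => (y i : ℂ)) *
        star (U : Matrix (Fin n) (Fin n) ℂ))
      = (U : Matrix (Fin n) (Fin n) ℂ) *
          diagonal (fun i =>
            (((∑ j, x j ^ t * y j ^ (1 - t))⁻¹ * (x i ^ t * y i ^ (1 - t)) : ℝ) : ℂ)) *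
          star (U : Matrix (Fin n) (Fin n) ℂ) := by
  have hcast : (fun i => ((x i ^ t : ℝ) : ℂ) * ((y i ^ (1 - t) : ℝ) : ℂ))
      = fun i => ((x i ^ t * y i ^ (1 - t) : ℝ) : ℂ) := by
    funext i
    push_cast
    ring
  simp only [genMix]
  rw [mRpow_cnj, mRpow_cnj, cnj_mul, hcast, cnj_trace, ← Complex.ofReal_sum,
    ← Complex.ofReal_inv, cnj_smul]
  congr 1
  congr 1
  funext i
  push_cast
  ring

private lemma petz_cnj (U : Matrix.unitaryGroup (Fin n) ℂ) (x y : Fin n → ℝ) (α : ℝ) :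
    petzRenyi α ((U : Matrix (Fin n) (Fin n) ℂ) * diagonal (fun i => (x i : ℂ)) *
        star (U : Matrix (Fin n) (Fin n) ℂ))
      ((U : Matrix (Fin n) (Fin n) ℂ) * diagonal (fun i => (y i : ℂ)) *
        star (U : Matrix (Fin n) (Fin n) ℂ))
      = 1 / (α - 1) * Real.log (∑ i, x i ^ α * y i ^ (1 - α)) := by
  simp only [petzRenyi]
  rw [trace_re_mRpow_mul]

private lemma holder_s11 (hn : 0 < n) (t : ℝ) (ht0 : 0 ≤ t) (ht1 : t ≤ 1)
    (x y : Fin n → ℝ) (hx : ∀ i, 0 < x i) (hy : ∀ i, 0 < y i) :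
    ∑ i, x i ^ t * y i ^ (1 - t) ≤ (∑ i, x i) ^ t * (∑ i, y i) ^ (1 - t) := by
  haveI : Nonempty (Fin n) := Fin.pos_iff_nonempty.mp hn
  set X := ∑ i, x i with hX
  set Y := ∑ i, y i with hY
  have hX0 : 0 < X := Finset.sum_pos (fun i _ => hx i) Finset.univ_nonempty
  have hY0 : 0 < Y := Finset.sum_pos (fun i _ => hy i) Finset.univ_nonempty
  have hpt : ∀ i, x i ^ t * y i ^ (1 - t)
      ≤ X ^ t * Y ^ (1 - t) * (t * (x i / X) + (1 - t) * (y i / Y)) := by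
    intro i
    have h1 : x i ^ t * y i ^ (1 - t)
        = X ^ t * Y ^ (1 - t) * ((x i / X) ^ t * (y i / Y) ^ (1 - t)) := by
      rw [Real.div_rpow (hx i).le hX0.le, Real.div_rpow (hy i).le hY0.le]
      have hXt : X ^ t ≠ 0 := (Real.rpow_pos_of_pos hX0 t).ne'
      have hYt : Y ^ (1 - t) ≠ 0 := (Real.rpow_pos_of_pos hY0 _).ne'
      field_simp
    rw [h1]
    refine mul_le_mul_of_nonneg_left ?_ (by positivity)
    exact Real.geom_mean_le_arith_mean2_weighted ht0 (by linarith)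
      (div_nonneg (hx i).le hX0.le) (div_nonneg (hy i).le hY0.le) (by ring)
  calc ∑ i, x i ^ t * y i ^ (1 - t)
      ≤ ∑ i, X ^ t * Y ^ (1 - t) * (t * (x i / X) + (1 - t) * (y i / Y)) :=
        Finset.sum_le_sum fun i _ => hpt i
    _ = X ^ t * Y ^ (1 - t) := by
        rw [← Finset.mul_sum]
        have h2 : ∑ i, (t * (x i / X) + (1 - t) * (y i / Y)) = 1 := by
          rw [Finset.sum_add_distrib, ← Finset.mul_sum, ← Finset.mul_sum,
            ← Finset.sum_div, ← Finset.sum_div, ← hX, ← hY,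
            div_self hX0.ne', div_self hY0.ne']
          ring
        rw [h2, mul_one]

private lemma rpow_juggle (a b c d : ℝ) (ha : 0 < a) (hb : 0 < b) (hc : 0 < c) (hd : 0 < d)
    (t α : ℝ) :
    (a ^ t * b ^ (1 - t)) ^ α * (c ^ t * d ^ (1 - t)) ^ (1 - α)
      = (a ^ α * c ^ (1 - α)) ^ t * (b ^ α * d ^ (1 - α)) ^ (1 - t) := by
  rw [Real.mul_rpow (by positivity) (by positivity),
    Real.mul_rpow (by positivity) (by positivity),
    Real.mul_rpow (by positivity) (by positivity),
    Real.mul_rpow (by positivity) (by positivity),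
    ← Real.rpow_mul ha.le, ← Real.rpow_mul hb.le, ← Real.rpow_mul hc.le,
    ← Real.rpow_mul hd.le, ← Real.rpow_mul ha.le, ← Real.rpow_mul hc.le,
    ← Real.rpow_mul hb.le, ← Real.rpow_mul hd.le,
    mul_comm t α, mul_comm (1 - t) α, mul_comm t (1 - α), mul_comm (1 - t) (1 - α)]
  ring

end AuxiliaryLemmas

/-- Generalized convexity of the Petz–Rényi α-relative entropy on commuting states:
for `α > 1`,
`D̂_α(M_{ρ,σ}^t ‖ M_{τ,ω}^t) ≤ t D̂_α(ρ‖τ) + (1−t) D̂_α(σ‖ω)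
  + (α/(1−α)) log Tr(ρ^t σ^{1−t}) + log Tr(τ^t ω^{1−t})`,
with the reverse inequality for `0 < α < 1`. -/
theorem petzRenyi_generalized_convexity {n : ℕ} (α t : ℝ) (ht0 : 0 ≤ t) (ht1 : t ≤ 1)
    (ρ σ τ ω : Matrix (Fin n) (Fin n) ℂ)
    (hρ : ρ.PosDef) (hρ1 : ρ.trace = 1)
    (hσ : σ.PosDef) (hσ1 : σ.trace = 1)
    (hτ : τ.PosDef) (hτ1 : τ.trace = 1)
    (hω : ω.PosDef) (hω1 : ω.trace = 1)
    (hρσ : ρ * σ = σ * ρ) (hρτ : ρ * τ = τ * ρ) (hρω : ρ * ω = ω * ρ)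
    (hστ : σ * τ = τ * σ) (hσω : σ * ω = ω * σ) (hτω : τ * ω = ω * τ) :
    (1 < α →
      petzRenyi α (genMix t ρ σ) (genMix t τ ω)
        ≤ t * petzRenyi α ρ τ + (1 - t) * petzRenyi α σ ω
          + α / (1 - α) * Real.log ((mRpow ρ t * mRpow σ (1 - t)).trace.re)
          + Real.log ((mRpow τ t * mRpow ω (1 - t)).trace.re)) ∧
    (0 < α → α < 1 →
      t * petzRenyi α ρ τ + (1 - t) * petzRenyi α σ ω
          + α / (1 - α) * Real.log ((mRpow ρ t * mRpow σ (1 - t)).trace.re)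
          + Real.log ((mRpow τ t * mRpow ω (1 - t)).trace.re)
        ≤ petzRenyi α (genMix t ρ σ) (genMix t τ ω)) := by
  have hn : 0 < n := by
    rcases Nat.eq_zero_or_pos n with h | h
    · exfalso
      subst h
      simp [Matrix.trace] at hρ1
    · exact h
  haveI : Nonempty (Fin n) := Fin.pos_iff_nonempty.mp hn
  obtain ⟨U, d, hd⟩ := joint_diag ![ρ, σ, τ, ω]
    (by
      intro i
      fin_cases i
      · exact hρ.1
      · exact hσ.1
      · exact hτ.1
      · exact hω.1)
    (by
      intro i j
      fin_cases i <;> fin_cases j <;>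
        first
          | rfl
          | exact hρσ
          | exact hρσ.symm
          | exact hρτ
          | exact hρτ.symm
          | exact hρω
          | exact hρω.symm
          | exact hστ
          | exact hστ.symm
          | exact hσω
          | exact hσω.symm
          | exact hτω
          | exact hτω.symm)
  have hρe : ρ = (U : Matrix (Fin n) (Fin n) ℂ) * diagonal (fun k => (d 0 k : ℂ)) *
      star (U : Matrix (Fin n) (Fin n) ℂ) := hd 0
  have hσe : σ = (U : Matrix (Fin n) (Fin n) ℂ) * diagonal (fun k => (d 1 k : ℂ)) *
      star (U : Matrix (Fin n) (Fin n) ℂ) := hd 1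
  have hτe : τ = (U : Matrix (Fin n) (Fin n) ℂ) * diagonal (fun k => (d 2 k : ℂ)) *
      star (U : Matrix (Fin n) (Fin n) ℂ) := hd 2
  have hωe : ω = (U : Matrix (Fin n) (Fin n) ℂ) * diagonal (fun k => (d 3 k : ℂ)) *
      star (U : Matrix (Fin n) (Fin n) ℂ) := hd 3
  have hp : ∀ i, 0 < d 0 i := cnj_posDef_entries U (d 0) (hρe ▸ hρ)
  have hq : ∀ i, 0 < d 1 i := cnj_posDef_entries U (d 1) (hσe ▸ hσ)
  have hu : ∀ i, 0 < d 2 i := cnj_posDef_entries U (d 2) (hτe ▸ hτ)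
  have hw : ∀ i, 0 < d 3 i := cnj_posDef_entries U (d 3) (hωe ▸ hω)
  rw [hρe, hσe, hτe, hωe, genMix_cnj, genMix_cnj, petz_cnj, petz_cnj, petz_cnj,
    trace_re_mRpow_mul, trace_re_mRpow_mul]
  set p : Fin n → ℝ := d 0
  set q : Fin n → ℝ := d 1
  set u : Fin n → ℝ := d 2
  set w : Fin n → ℝ := d 3
  set a : ℝ := ∑ j, p j ^ t * q j ^ (1 - t) with ha
  set b : ℝ := ∑ j, u j ^ t * w j ^ (1 - t) with hb
  set X : ℝ := ∑ i, p i ^ α * u i ^ (1 - α) with hX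
  set Y : ℝ := ∑ i, q i ^ α * w i ^ (1 - α) with hY
  set Z : ℝ := ∑ i, (p i ^ t * q i ^ (1 - t)) ^ α * (u i ^ t * w i ^ (1 - t)) ^ (1 - α) with hZ
  set S : ℝ := ∑ i, (a⁻¹ * (p i ^ t * q i ^ (1 - t))) ^ α *
    (b⁻¹ * (u i ^ t * w i ^ (1 - t))) ^ (1 - α) with hS
  have hpq : ∀ i, 0 < p i ^ t * q i ^ (1 - t) :=
    fun i => mul_pos (Real.rpow_pos_of_pos (hp i) t) (Real.rpow_pos_of_pos (hq i) (1 - t))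
  have huw : ∀ i, 0 < u i ^ t * w i ^ (1 - t) :=
    fun i => mul_pos (Real.rpow_pos_of_pos (hu i) t) (Real.rpow_pos_of_pos (hw i) (1 - t))
  have hpu : ∀ i, 0 < p i ^ α * u i ^ (1 - α) :=
    fun i => mul_pos (Real.rpow_pos_of_pos (hp i) α) (Real.rpow_pos_of_pos (hu i) (1 - α))
  have hqw : ∀ i, 0 < q i ^ α * w i ^ (1 - α) :=
    fun i => mul_pos (Real.rpow_pos_of_pos (hq i) α) (Real.rpow_pos_of_pos (hw i) (1 - α))
  have ha0 : 0 < a := Finset.sum_pos (fun i _ => hpq i) Finset.univ_nonempty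
  have hb0 : 0 < b := Finset.sum_pos (fun i _ => huw i) Finset.univ_nonempty
  have hX0 : 0 < X := Finset.sum_pos (fun i _ => hpu i) Finset.univ_nonempty
  have hY0 : 0 < Y := Finset.sum_pos (fun i _ => hqw i) Finset.univ_nonempty
  have hZ0 : 0 < Z := Finset.sum_pos (fun i _ => mul_pos
    (Real.rpow_pos_of_pos (hpq i) α) (Real.rpow_pos_of_pos (huw i) (1 - α)))
    Finset.univ_nonempty
  have hSeq : S = a⁻¹ ^ α * b⁻¹ ^ (1 - α) * Z := by
    rw [hZ, Finset.mul_sum, hS]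
    refine Finset.sum_congr rfl fun i _ => ?_
    rw [Real.mul_rpow (inv_nonneg.mpr ha0.le) (hpq i).le,
      Real.mul_rpow (inv_nonneg.mpr hb0.le) (huw i).le]
    ring
  have hlogS : Real.log S = Real.log Z - α * Real.log a - (1 - α) * Real.log b := by
    rw [hSeq,
      Real.log_mul (mul_pos (Real.rpow_pos_of_pos (inv_pos.mpr ha0) α)
        (Real.rpow_pos_of_pos (inv_pos.mpr hb0) (1 - α))).ne' hZ0.ne',
      Real.log_mul (Real.rpow_pos_of_pos (inv_pos.mpr ha0) α).ne'
        (Real.rpow_pos_of_pos (inv_pos.mpr hb0) (1 - α)).ne',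
      Real.log_rpow (inv_pos.mpr ha0), Real.log_rpow (inv_pos.mpr hb0),
      Real.log_inv, Real.log_inv]
    ring
  have hZeq : Z = ∑ i, (p i ^ α * u i ^ (1 - α)) ^ t * (q i ^ α * w i ^ (1 - α)) ^ (1 - t) :=
    Finset.sum_congr rfl fun i _ => rpow_juggle _ _ _ _ (hp i) (hq i) (hu i) (hw i) t α
  have hkey : Real.log Z ≤ t * Real.log X + (1 - t) * Real.log Y := by
    have h1 : Z ≤ X ^ t * Y ^ (1 - t) := by
      rw [hZeq]
      exact holder_s11 hn t ht0 ht1 _ _ hpu hqw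
    have h2 := Real.log_le_log hZ0 h1
    rwa [Real.log_mul (Real.rpow_pos_of_pos hX0 t).ne' (Real.rpow_pos_of_pos hY0 (1 - t)).ne',
      Real.log_rpow hX0, Real.log_rpow hY0] at h2
  constructor
  · intro hα
    have h1 : α - 1 ≠ 0 := sub_ne_zero.mpr (ne_of_gt hα)
    have h2 : (1 : ℝ) - α ≠ 0 := sub_ne_zero.mpr (ne_of_lt hα)
    have eL : 1 / (α - 1) * Real.log S
        = 1 / (α - 1) * Real.log Z + (α / (1 - α) * Real.log a + Real.log b) := by
      rw [hlogS]
      field_simp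
      ring
    have eR : t * (1 / (α - 1) * Real.log X) + (1 - t) * (1 / (α - 1) * Real.log Y)
          + α / (1 - α) * Real.log a + Real.log b
        = 1 / (α - 1) * (t * Real.log X + (1 - t) * Real.log Y)
          + (α / (1 - α) * Real.log a + Real.log b) := by
      ring
    rw [eL, eR]
    have hpos : (0 : ℝ) ≤ 1 / (α - 1) := le_of_lt (div_pos one_pos (by linarith))
    exact add_le_add_left (mul_le_mul_of_nonneg_left hkey hpos) _
  · intro hα0 hα1
    have h1 : α - 1 ≠ 0 := sub_ne_zero.mpr (ne_of_lt hα1)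
    have h2 : (1 : ℝ) - α ≠ 0 := sub_ne_zero.mpr (ne_of_gt hα1)
    have eL : 1 / (α - 1) * Real.log S
        = 1 / (α - 1) * Real.log Z + (α / (1 - α) * Real.log a + Real.log b) := by
      rw [hlogS]
      field_simp
      ring
    have eR : t * (1 / (α - 1) * Real.log X) + (1 - t) * (1 / (α - 1) * Real.log Y)
          + α / (1 - α) * Real.log a + Real.log b
        = 1 / (α - 1) * (t * Real.log X + (1 - t) * Real.log Y)
          + (α / (1 - α) * Real.log a + Real.log b) := by
      ring
    rw [eL, eR]
    have hneg : 1 / (α - 1) ≤ (0 : ℝ) :=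
      le_of_lt (div_neg_of_pos_of_neg one_pos (by linarith))
    exact add_le_add_left (mul_le_mul_of_nonpos_left hkey hneg) _
end

section
/- Let ρ and σ be density matrices on ℂ^n with σ positive definite, with spectral decompositions ρ = Σ_i p_i |x_i⟩⟨x_i| and σ = Σ_j q_j |y_j⟩⟨y_j| for orthonormal bases {|x_i⟩}, {|y_j⟩}. Then as α → 1 (with α ≠ 1), the quantum relative α-entropy S_α(ρ‖σ) tends to Umegaki's relative entropy: lim_{α→1} S_α(ρ‖σ) = Σ_{i: p_i > 0} p_i·log p_i − Σ_{i,j} p_i·log q_j·|⟨x_i|y_j⟩|² = Tr(ρ log ρ) − Tr(ρ log σ). -/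
open Matrix ComplexOrder

/-- Matrix logarithm of a Hermitian matrix via its spectral decomposition,
`log A = ∑_{i : λ i > 0} (log λ i) |x i⟩⟨x i|` (using `Real.log 0 = 0`). -/
noncomputable def mLog {m : Type*} [Fintype m] [DecidableEq m]
    (A : Matrix m m ℂ) : Matrix m m ℂ :=
  if hA : A.IsHermitian then
    (hA.eigenvectorUnitary : Matrix m m ℂ) *
      Matrix.diagonal (fun i => ((Real.log (hA.eigenvalues i) : ℝ) : ℂ)) *
      star (hA.eigenvectorUnitary : Matrix m m ℂ)
  else 0

namespace SalphaAux

variable {n : ℕ}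

/-- Orthonormality predicate. -/
def Ortho (v : Fin n → Fin n → ℂ) : Prop :=
  ∀ i j, star (v i) ⬝ᵥ v j = if i = j then 1 else 0

lemma vecMulVec_mulVec (a b x : Fin n → ℂ) :
    vecMulVec a b *ᵥ x = (b ⬝ᵥ x) • a := by
  ext i
  simp [mulVec, vecMulVec_apply, dotProduct, Finset.mul_sum, Finset.sum_mul]
  exact Finset.sum_congr rfl fun j _ => by ring

lemma vecMulVec_mul_vecMulVec (a b c d : Fin n → ℂ) :
    vecMulVec a b * vecMulVec c d = (b ⬝ᵥ c) • vecMulVec a d := by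
  ext i l
  simp [mul_apply, vecMulVec_apply, dotProduct, Finset.sum_mul]
  exact Finset.sum_congr rfl fun j _ => by ring

lemma mul_vecMulVec (M : Matrix (Fin n) (Fin n) ℂ) (a b : Fin n → ℂ) :
    M * vecMulVec a b = vecMulVec (M *ᵥ a) b := by
  ext i l
  simp [mul_apply, vecMulVec_apply, mulVec, dotProduct, Finset.sum_mul]
  exact Finset.sum_congr rfl fun j _ => by ring

lemma trace_vecMulVec (a b : Fin n → ℂ) :
    (vecMulVec a b).trace = b ⬝ᵥ a := by
  simp [Matrix.trace, Matrix.diag, vecMulVec_apply, dotProduct, mul_comm]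

lemma star_dot_comm (a b : Fin n → ℂ) :
    star b ⬝ᵥ a = starRingEnd ℂ (star a ⬝ᵥ b) := by
  simp [dotProduct, map_sum, mul_comm]

/-- Resolution of the identity for an orthonormal family of `n` vectors in `ℂⁿ`. -/
lemma resolution {v : Fin n → Fin n → ℂ} (hv : Ortho v) :
    ∑ j, vecMulVec (v j) (star (v j)) = 1 := by
  set V : Matrix (Fin n) (Fin n) ℂ := Matrix.of fun a j => v j a with hV
  have h1 : Vᴴ * V = 1 := by
    ext i j
    have := hv i j
    simpa [hV, mul_apply, conjTranspose_apply, dotProduct, Matrix.one_apply] using this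
  have h2 : V * Vᴴ = 1 := mul_eq_one_comm.mp h1
  ext a b
  have := congrFun (congrFun h2 a) b
  simpa [hV, mul_apply, conjTranspose_apply, vecMulVec_apply, Matrix.sum_apply] using this

lemma sum_mulVec {ι : Type*} (s : Finset ι) (A : ι → Matrix (Fin n) (Fin n) ℂ) (x : Fin n → ℂ) :
    (∑ j ∈ s, A j) *ᵥ x = ∑ j ∈ s, A j *ᵥ x := by
  ext i
  simp [mulVec, dotProduct, Matrix.sum_apply, Finset.sum_apply, Finset.sum_mul]
  exact Finset.sum_comm

/-- Eigenvector equation from a spectral decomposition. -/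
lemma mulVec_eig {c : Fin n → ℝ} {v : Fin n → Fin n → ℂ} (hv : Ortho v) (k : Fin n) :
    (∑ j, (c j : ℂ) • vecMulVec (v j) (star (v j))) *ᵥ v k = (c k : ℂ) • v k := by
  rw [sum_mulVec]
  have : ∀ j, ((c j : ℂ) • vecMulVec (v j) (star (v j))) *ᵥ v k
      = (c j : ℂ) • ((star (v j) ⬝ᵥ v k) • v j) := by
    intro j
    rw [Matrix.smul_mulVec, vecMulVec_mulVec]
  simp only [this]
  rw [Finset.sum_eq_single k]
  · rw [hv k k]; simp
  · intro j _ hj; rw [hv j k]; simp [hj]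
  · simp

lemma dot_sum {ι : Type*} (s : Finset ι) (a : Fin n → ℂ) (f : ι → (Fin n → ℂ)) :
    a ⬝ᵥ (∑ j ∈ s, f j) = ∑ j ∈ s, a ⬝ᵥ f j := by
  simp only [dotProduct, Finset.sum_apply, Finset.mul_sum]
  exact Finset.sum_comm

/-- Well-definedness of spectral functions: applying `f` through two orthonormal
spectral decompositions of the same matrix gives the same result. -/
lemma spectral_fun_eq {A : Matrix (Fin n) (Fin n) ℂ}
    {c d : Fin n → ℝ} {u v : Fin n → Fin n → ℂ}
    (hu : Ortho u) (hv : Ortho v)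
    (hAu : A = ∑ j, (c j : ℂ) • vecMulVec (u j) (star (u j)))
    (hAv : A = ∑ j, (d j : ℂ) • vecMulVec (v j) (star (v j)))
    (f : ℝ → ℝ) :
    ∑ j, ((f (c j) : ℝ) : ℂ) • vecMulVec (u j) (star (u j))
      = ∑ j, ((f (d j) : ℝ) : ℂ) • vecMulVec (v j) (star (v j)) := by
  have key : ∀ j k, (c j : ℂ) * (star (u j) ⬝ᵥ v k) = (d k : ℂ) * (star (u j) ⬝ᵥ v k) := by
    intro j k
    have h1 : star (u j) ⬝ᵥ (A *ᵥ v k) = (d k : ℂ) * (star (u j) ⬝ᵥ v k) := by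
      rw [hAv, mulVec_eig hv]
      simp [dotProduct_smul]
    have h2 : star (u j) ⬝ᵥ (A *ᵥ v k) = (c j : ℂ) * (star (u j) ⬝ᵥ v k) := by
      rw [hAu, sum_mulVec]
      have hterm : ∀ m, star (u j) ⬝ᵥ (((c m : ℂ) • vecMulVec (u m) (star (u m))) *ᵥ v k)
          = (c m : ℂ) * (star (u m) ⬝ᵥ v k) * (star (u j) ⬝ᵥ u m) := by
        intro m
        rw [Matrix.smul_mulVec, vecMulVec_mulVec]
        simp [dotProduct_smul]
        ring
      rw [dot_sum]
      simp only [hterm]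
      rw [Finset.sum_eq_single j]
      · rw [hu j j]; simp
      · intro m _ hm; rw [hu j m]; simp [Ne.symm hm]
      · simp
    rw [← h1, h2]
  have keyf : ∀ j k, ((f (c j) : ℝ) : ℂ) * (star (u j) ⬝ᵥ v k)
      = ((f (d k) : ℝ) : ℂ) * (star (u j) ⬝ᵥ v k) := by
    intro j k
    rcases eq_or_ne (star (u j) ⬝ᵥ v k) 0 with h | h
    · simp [h]
    · have : (c j : ℂ) = (d k : ℂ) := mul_right_cancel₀ h (key j k)
      rw [Complex.ofReal_inj.mp this]
  have hMv : ∀ k, (∑ j, ((f (c j) : ℝ) : ℂ) • vecMulVec (u j) (star (u j))) *ᵥ v k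
      = ((f (d k) : ℝ) : ℂ) • v k := by
    intro k
    rw [sum_mulVec]
    have hterm : ∀ j, (((f (c j) : ℝ) : ℂ) • vecMulVec (u j) (star (u j))) *ᵥ v k
        = ((f (d k) : ℝ) : ℂ) • ((star (u j) ⬝ᵥ v k) • u j) := by
      intro j
      rw [Matrix.smul_mulVec, vecMulVec_mulVec, smul_smul, smul_smul, keyf]
    simp only [hterm]
    rw [← Finset.smul_sum]
    congr 1
    have := congrArg (fun M => M *ᵥ v k) (resolution hu)
    simp only [sum_mulVec, one_mulVec] at this
    simpa only [vecMulVec_mulVec] using this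
  calc ∑ j, ((f (c j) : ℝ) : ℂ) • vecMulVec (u j) (star (u j))
      = (∑ j, ((f (c j) : ℝ) : ℂ) • vecMulVec (u j) (star (u j))) * 1 := by rw [mul_one]
    _ = ∑ k, ((f (d k) : ℝ) : ℂ) • vecMulVec (v k) (star (v k)) := by
        rw [← resolution hv, Finset.mul_sum]
        refine Finset.sum_congr rfl fun k _ => ?_
        rw [mul_vecMulVec, hMv k]
        ext i l
        simp [vecMulVec_apply]
        ring

/-- Conjugation of a diagonal matrix expressed as a sum of rank-one matrices. -/
lemma conj_diag_sum (U : Matrix (Fin n) (Fin n) ℂ) (g : Fin n → ℂ) :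
    U * diagonal g * star U
      = ∑ j, g j • vecMulVec (fun a => U a j) (star fun a => U a j) := by
  ext a b
  simp [mul_apply, diagonal, Matrix.sum_apply, vecMulVec_apply, Matrix.star_apply,
    Finset.sum_mul, mul_comm, mul_left_comm]
  refine Finset.sum_congr rfl fun j _ => ?_
  ring

/-- Columns of a unitary matrix are orthonormal. -/
lemma ortho_cols {U : Matrix (Fin n) (Fin n) ℂ} (hU : star U * U = 1) :
    Ortho (fun j a => U a j) := by
  intro i j
  have := congrFun (congrFun hU i) j
  simpa [mul_apply, Matrix.star_apply, dotProduct, Matrix.one_apply] using this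


/-- Intrinsic orthonormal spectral decomposition of a Hermitian matrix. -/
lemma herm_decomp {A : Matrix (Fin n) (Fin n) ℂ} (hA : A.IsHermitian) :
    A = ∑ j, ((hA.eigenvalues j : ℝ) : ℂ) •
      vecMulVec (fun a => (hA.eigenvectorUnitary : Matrix (Fin n) (Fin n) ℂ) a j)
        (star fun a => (hA.eigenvectorUnitary : Matrix (Fin n) (Fin n) ℂ) a j) := by
  conv_lhs => rw [hA.spectral_theorem]
  rw [Unitary.conjStarAlgAut_apply, conj_diag_sum]
  rfl

lemma ortho_eigen {A : Matrix (Fin n) (Fin n) ℂ} (hA : A.IsHermitian) :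
    Ortho (fun j a => (hA.eigenvectorUnitary : Matrix (Fin n) (Fin n) ℂ) a j) :=
  ortho_cols (Unitary.coe_star_mul_self hA.eigenvectorUnitary)

/-- `mRpow` through an arbitrary orthonormal spectral decomposition. -/
lemma mRpow_decomp {A : Matrix (Fin n) (Fin n) ℂ} (hA : A.IsHermitian)
    {d : Fin n → ℝ} {v : Fin n → Fin n → ℂ} (hv : Ortho v)
    (hAv : A = ∑ j, (d j : ℂ) • vecMulVec (v j) (star (v j))) (r : ℝ) :
    mRpow A r = ∑ j, ((d j ^ r : ℝ) : ℂ) • vecMulVec (v j) (star (v j)) := by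
  rw [mRpow, dif_pos hA, conj_diag_sum]
  exact spectral_fun_eq (ortho_eigen hA) hv (herm_decomp hA) hAv (fun t => t ^ r)

/-- `mLog` through an arbitrary orthonormal spectral decomposition. -/
lemma mLog_decomp {A : Matrix (Fin n) (Fin n) ℂ} (hA : A.IsHermitian)
    {d : Fin n → ℝ} {v : Fin n → Fin n → ℂ} (hv : Ortho v)
    (hAv : A = ∑ j, (d j : ℂ) • vecMulVec (v j) (star (v j))) :
    mLog A = ∑ j, ((Real.log (d j) : ℝ) : ℂ) • vecMulVec (v j) (star (v j)) := by
  rw [mLog, dif_pos hA, conj_diag_sum]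
  exact spectral_fun_eq (ortho_eigen hA) hv (herm_decomp hA) hAv Real.log

/-- Real part of the trace of a product of two spectral decompositions. -/
lemma trace_re_eq (a b : Fin n → ℝ) (x y : Fin n → Fin n → ℂ) :
    ((∑ i, (a i : ℂ) • vecMulVec (x i) (star (x i))) *
      (∑ j, (b j : ℂ) • vecMulVec (y j) (star (y j)))).trace.re
      = ∑ i, ∑ j, a i * b j * ‖star (x i) ⬝ᵥ y j‖ ^ 2 := by
  rw [Finset.sum_mul_sum]
  rw [Matrix.trace_sum]
  rw [Complex.re_sum]
  refine Finset.sum_congr rfl fun i _ => ?_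
  rw [Matrix.trace_sum, Complex.re_sum]
  refine Finset.sum_congr rfl fun j _ => ?_
  rw [smul_mul_assoc, mul_smul_comm, vecMulVec_mul_vecMulVec, trace_smul, trace_smul,
    trace_smul, trace_vecMulVec]
  rw [star_dot_comm (x i) (y j), smul_eq_mul, smul_eq_mul, smul_eq_mul, Complex.mul_conj]
  rw [show ((b j : ℂ) * ((Complex.normSq (star (x i) ⬝ᵥ y j) : ℝ) : ℂ))
      = ((b j * Complex.normSq (star (x i) ⬝ᵥ y j) : ℝ) : ℂ) by push_cast; ring]
  rw [show ((a i : ℂ) * ((b j * Complex.normSq (star (x i) ⬝ᵥ y j) : ℝ) : ℂ))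
      = ((a i * (b j * Complex.normSq (star (x i) ⬝ᵥ y j)) : ℝ) : ℂ) by push_cast; ring]
  rw [Complex.ofReal_re, Complex.normSq_eq_norm_sq]
  ring

/-- Real part of the trace of a single spectral decomposition. -/
lemma trace_re_single (a : Fin n → ℝ) {x : Fin n → Fin n → ℂ} (hx : Ortho x) :
    (∑ i, (a i : ℂ) • vecMulVec (x i) (star (x i))).trace.re = ∑ i, a i := by
  rw [Matrix.trace_sum, Complex.re_sum]
  refine Finset.sum_congr rfl fun i _ => ?_
  rw [trace_smul, trace_vecMulVec, hx i i]
  simp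


open Topology Filter in
/-- The purely scalar limit computation. -/
lemma tendsto_aux {n : ℕ} (p q : Fin n → ℝ) (c : Fin n → Fin n → ℝ)
    (hp : ∀ i, 0 ≤ p i) (hq : ∀ j, 0 < q j)
    (h11 : ∑ i, ∑ j, p i * c i j = 1)
    (hps : ∑ i, p i = 1) (hqs : ∑ j, q j = 1) :
    Filter.Tendsto (fun α : ℝ =>
      α / (1 - α) * Real.log (∑ i, ∑ j, p i * q j ^ (α - 1) * c i j)
      - 1 / (1 - α) * Real.log (∑ i, p i ^ α)
      + Real.log (∑ j, q j ^ α)) (𝓝[≠] (1:ℝ))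
      (𝓝 ((∑ i, p i * Real.log (p i)) - ∑ i, ∑ j, p i * Real.log (q j) * c i j)) := by
  set T1 : ℝ → ℝ := fun α => ∑ i, ∑ j, p i * q j ^ (α - 1) * c i j with hT1def
  set T2 : ℝ → ℝ := fun α => ∑ i, p i ^ α with hT2def
  set T3 : ℝ → ℝ := fun α => ∑ j, q j ^ α with hT3def
  set D1 : ℝ := ∑ i, ∑ j, p i * Real.log (q j) * c i j with hD1def
  set D2 : ℝ := ∑ i, p i * Real.log (p i) with hD2def
  have hT11 : T1 1 = 1 := by
    rw [hT1def]
    simp only [sub_self, Real.rpow_zero, mul_one]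
    exact h11
  have hT21 : T2 1 = 1 := by
    rw [hT2def]
    simp only [Real.rpow_one]
    exact hps
  have hT31 : T3 1 = 1 := by
    rw [hT3def]
    simp only [Real.rpow_one]
    exact hqs
  have hd1 : HasDerivAt T1 D1 1 := by
    rw [hT1def, hD1def]
    refine HasDerivAt.fun_sum fun i _ => HasDerivAt.fun_sum fun j _ => ?_
    have h0 : HasDerivAt (fun α : ℝ => q j ^ (α - 1)) (Real.log (q j)) 1 := by
      have hb : HasDerivAt (fun α : ℝ => α - 1) 1 1 := (hasDerivAt_id 1).sub_const 1
      have := (hasDerivAt_const (1:ℝ) (q j)).rpow hb (by simpa using hq j)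
      simpa [Real.rpow_zero] using this
    simpa using (h0.const_mul (p i)).mul_const (c i j)
  have hd2 : HasDerivAt T2 D2 1 := by
    rw [hT2def, hD2def]
    refine HasDerivAt.fun_sum fun i _ => ?_
    rcases (hp i).eq_or_lt with h | h
    · have heq : (fun α : ℝ => p i ^ α) =ᶠ[𝓝 (1:ℝ)] (fun _ => (0:ℝ)) := by
        filter_upwards [eventually_ne_nhds one_ne_zero] with α hα
        rw [← h, Real.zero_rpow hα]
      have h0 := (hasDerivAt_const (1:ℝ) (0:ℝ)).congr_of_eventuallyEq heq
      convert h0 using 1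
      rw [← h]; ring
    · have := (Real.hasStrictDerivAt_const_rpow h (1:ℝ)).hasDerivAt
      simpa [Real.rpow_one, mul_comm] using this
  have hd3 : HasDerivAt T3 (∑ j, q j * Real.log (q j)) 1 := by
    rw [hT3def]
    refine HasDerivAt.fun_sum fun j _ => ?_
    have := (Real.hasStrictDerivAt_const_rpow (hq j) (1:ℝ)).hasDerivAt
    simpa [Real.rpow_one, mul_comm] using this
  have hl1 : HasDerivAt (fun α => Real.log (T1 α)) D1 1 := by
    have := hd1.log (by rw [hT11]; exact one_ne_zero)
    simpa [hT11] using this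
  have hl2 : HasDerivAt (fun α => Real.log (T2 α)) D2 1 := by
    have := hd2.log (by rw [hT21]; exact one_ne_zero)
    simpa [hT21] using this
  set F : ℝ → ℝ := fun α => α * Real.log (T1 α) - Real.log (T2 α) with hFdef
  have hF : HasDerivAt F (D1 - D2) 1 := by
    rw [hFdef]
    have := ((hasDerivAt_id (1:ℝ)).mul hl1).sub hl2
    refine this.congr_deriv ?_
    rw [hT11, Real.log_one]
    simp
  have hF1 : F 1 = 0 := by
    rw [hFdef]
    simp [hT11, hT21]
  have hslope := hasDerivAt_iff_tendsto_slope.mp hF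
  have h3 : Filter.Tendsto (fun α => Real.log (T3 α)) (𝓝[≠] (1:ℝ)) (𝓝 0) := by
    have hc : ContinuousAt (fun α => Real.log (T3 α)) 1 :=
      (Real.continuousAt_log (by rw [hT31]; exact one_ne_zero)).comp hd3.continuousAt
    have := hc.tendsto.mono_left (nhdsWithin_le_nhds (s := {(1:ℝ)}ᶜ))
    simpa [hT31] using this
  have hlim : Filter.Tendsto (fun α => -slope F 1 α + Real.log (T3 α))
      (𝓝[≠] (1:ℝ)) (𝓝 (-(D1 - D2) + 0)) := hslope.neg.add h3
  have hval : -(D1 - D2) + 0 = D2 - D1 := by ring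
  rw [hval] at hlim
  refine Filter.Tendsto.congr' ?_ hlim
  filter_upwards [self_mem_nhdsWithin] with α hα
  have hα1 : α ≠ 1 := hα
  have h2 : α - 1 ≠ 0 := sub_ne_zero.mpr hα1
  have h1 : (1:ℝ) - α ≠ 0 := sub_ne_zero.mpr (Ne.symm hα1)
  rw [slope_def_field, hF1, hFdef]
  simp only
  field_simp
  ring

end SalphaAux


open Topology in
/-- As `α → 1`, the quantum relative α-entropy tends to Umegaki's relative entropy
`∑_i p_i log p_i − ∑_{i,j} p_i log q_j |⟨x_i|y_j⟩|² = Tr(ρ log ρ) − Tr(ρ log σ)`. -/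
theorem Salpha_tendsto_umegaki {n : ℕ}
    (ρ σ : Matrix (Fin n) (Fin n) ℂ)
    (hρ : ρ.PosSemidef) (hρ1 : ρ.trace = 1)
    (hσ : σ.PosDef) (hσ1 : σ.trace = 1)
    (p q : Fin n → ℝ) (x y : Fin n → (Fin n → ℂ))
    (hp : ∀ i, 0 ≤ p i) (hq : ∀ j, 0 ≤ q j)
    (hx : ∀ i j, star (x i) ⬝ᵥ x j = if i = j then 1 else 0)
    (hy : ∀ i j, star (y i) ⬝ᵥ y j = if i = j then 1 else 0)
    (hρdec : ρ = ∑ i, (p i : ℂ) • vecMulVec (x i) (star (x i)))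
    (hσdec : σ = ∑ j, (q j : ℂ) • vecMulVec (y j) (star (y j))) :
    Filter.Tendsto (fun α => Salpha α ρ σ) (𝓝[≠] (1 : ℝ))
      (𝓝 ((∑ i, p i * Real.log (p i))
          - ∑ i, ∑ j, p i * Real.log (q j) * ‖star (x i) ⬝ᵥ y j‖ ^ 2)) ∧
    (∑ i, p i * Real.log (p i))
          - ∑ i, ∑ j, p i * Real.log (q j) * ‖star (x i) ⬝ᵥ y j‖ ^ 2
      = (ρ * mLog ρ).trace.re - (ρ * mLog σ).trace.re := by
  have hxo : SalphaAux.Ortho x := hx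
  have hyo : SalphaAux.Ortho y := hy
  have hρH : ρ.IsHermitian := hρ.1
  have hσH : σ.IsHermitian := hσ.1
  have hyne : ∀ j, y j ≠ 0 := by
    intro j h
    have h1 := hy j j
    rw [h] at h1
    simp at h1
  have hq' : ∀ j, 0 < q j := by
    intro j
    have h0 := hσ.dotProduct_mulVec_pos (hyne j)
    have hmv : σ *ᵥ y j = (q j : ℂ) • y j := by
      rw [hσdec]; exact SalphaAux.mulVec_eig hyo j
    rw [hmv] at h0
    have h2 : star (y j) ⬝ᵥ ((q j : ℂ) • y j) = (q j : ℂ) := by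
      rw [dotProduct_smul, hy j j]
      simp
    rw [h2] at h0
    exact_mod_cast h0
  have hps : ∑ i, p i = 1 := by
    have h := SalphaAux.trace_re_single p hxo
    rw [← hρdec, hρ1] at h
    simpa using h.symm
  have hqs : ∑ j, q j = 1 := by
    have h := SalphaAux.trace_re_single q hyo
    rw [← hσdec, hσ1] at h
    simpa using h.symm
  have hpar : ∀ i, ∑ j, ‖star (x i) ⬝ᵥ y j‖ ^ 2 = (1:ℝ) := by
    intro i
    have h := congrArg (fun M => star (x i) ⬝ᵥ (M *ᵥ x i)) (SalphaAux.resolution hyo)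
    simp only [SalphaAux.sum_mulVec, SalphaAux.vecMulVec_mulVec, one_mulVec,
      SalphaAux.dot_sum, dotProduct_smul, smul_eq_mul] at h
    rw [hx i i] at h
    simp only [if_true] at h
    have h2 : ∑ j, ((‖star (x i) ⬝ᵥ y j‖ ^ 2 : ℝ) : ℂ) = 1 := by
      rw [← h]
      refine Finset.sum_congr rfl fun j _ => ?_
      rw [SalphaAux.star_dot_comm (x i) (y j), mul_comm, Complex.mul_conj]
      norm_cast
      simp [Complex.normSq_eq_norm_sq]
    exact_mod_cast h2
  have h11 : ∑ i, ∑ j, p i * ‖star (x i) ⬝ᵥ y j‖ ^ 2 = 1 := by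
    calc ∑ i, ∑ j, p i * ‖star (x i) ⬝ᵥ y j‖ ^ 2 = ∑ i, p i := by
          refine Finset.sum_congr rfl fun i _ => ?_
          rw [← Finset.mul_sum, hpar i, mul_one]
      _ = 1 := hps
  have htr1 : ∀ α : ℝ, (ρ * mRpow σ (α - 1)).trace.re
      = ∑ i, ∑ j, p i * q j ^ (α - 1) * ‖star (x i) ⬝ᵥ y j‖ ^ 2 := by
    intro α
    rw [SalphaAux.mRpow_decomp hσH hyo hσdec (α - 1)]
    conv_lhs => rw [hρdec]
    exact SalphaAux.trace_re_eq p (fun j => q j ^ (α - 1)) x y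
  have htr2 : ∀ α : ℝ, (mRpow ρ α).trace.re = ∑ i, p i ^ α := by
    intro α
    rw [SalphaAux.mRpow_decomp hρH hxo hρdec α]
    exact SalphaAux.trace_re_single (fun i => p i ^ α) hxo
  have htr3 : ∀ α : ℝ, (mRpow σ α).trace.re = ∑ j, q j ^ α := by
    intro α
    rw [SalphaAux.mRpow_decomp hσH hyo hσdec α]
    exact SalphaAux.trace_re_single (fun j => q j ^ α) hyo
  constructor
  · have hmain := SalphaAux.tendsto_aux p q (fun i j => ‖star (x i) ⬝ᵥ y j‖ ^ 2)
      hp hq' h11 hps hqs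
    refine hmain.congr fun α => ?_
    simp only [Salpha]
    rw [htr1 α, htr2 α, htr3 α]
  · have hlogρ : (ρ * mLog ρ).trace.re = ∑ i, p i * Real.log (p i) := by
      rw [SalphaAux.mLog_decomp hρH hxo hρdec]
      conv_lhs => rw [hρdec]
      rw [SalphaAux.trace_re_eq p (fun i => Real.log (p i)) x x]
      refine Finset.sum_congr rfl fun i _ => ?_
      rw [Finset.sum_eq_single i]
      · rw [hx i i]; simp
      · intro k _ hk
        rw [hx i k]
        simp [Ne.symm hk]
      · simp
    have hlogσ : (ρ * mLog σ).trace.re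
        = ∑ i, ∑ j, p i * Real.log (q j) * ‖star (x i) ⬝ᵥ y j‖ ^ 2 := by
      rw [SalphaAux.mLog_decomp hσH hyo hσdec]
      conv_lhs => rw [hρdec]
      exact SalphaAux.trace_re_eq p (fun j => Real.log (q j)) x y
    rw [hlogρ, hlogσ]
end
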